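/- arXiv:2602.03363 — 5 statements merged into one kernel-verified Lean document; each statement's English description precedes it below -/
import Mathlib

section
/- Let n ≥ 1 and let h ∈ Γ_n be nonzero and span an extreme ray of Γ_n. Then h is modular or tight: either h(A) = Σ_{i∈A} h({i}) for every A ⊆ N_n, or h(N_n) = h(N_n \ {i}) for every i ∈ N_n. -/
open Finset

/-- Shannon entropy (natural log) of the random variable `X : Ω → S`
under the probability mass function `p : Ω → ℝ`. -/
noncomputable def Hent {Ω S : Type} [Fintype Ω] [DecidableEq S]
    (p : Ω → ℝ) (X : Ω → S) : ℝ :=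
  ∑ s ∈ Finset.univ.image X,
    Real.negMulLog (∑ ω ∈ Finset.univ.filter (fun ω => X ω = s), p ω)

/-- The joint random variable `(X_i)_{i ∈ A}`. -/
def joint {Ω : Type} {n : ℕ} (X : Fin n → Ω → ℕ) (A : Finset (Fin n)) :
    Ω → (A → ℕ) :=
  fun ω i => X i ω

/-- A set function `h : 2^{N_n} → ℝ` is entropic if it is the entropy function of
some random vector `(X_1, …, X_n)` on a finite probability space. -/
def IsEntropic {n : ℕ} (h : Finset (Fin n) → ℝ) : Prop :=
  ∃ (N : ℕ) (p : Fin N → ℝ) (X : Fin n → Fin N → ℕ),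
    (∀ ω, 0 ≤ p ω) ∧ (∑ ω, p ω) = 1 ∧
    ∀ A : Finset (Fin n), h A = Hent p (joint X A)

/-- The polymatroidal region Γ_n. -/
def PolymatroidRegion (n : ℕ) : Set (Finset (Fin n) → ℝ) :=
  {h | h ∅ = 0 ∧ (∀ A, 0 ≤ h A) ∧ (∀ A B, A ⊆ B → h A ≤ h B) ∧
       (∀ A B, h (A ∩ B) + h (A ∪ B) ≤ h A + h B)}

/-- A nonzero `h ∈ Γ_n` spans an extreme ray of `Γ_n` if whenever `h₁, h₂ ∈ Γ_n` and
`h₁ + h₂` is a nonnegative multiple of `h`, both `h₁` and `h₂` are nonnegative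
multiples of `h`. -/
def SpansExtremeRay {n : ℕ} (h : Finset (Fin n) → ℝ) : Prop :=
  h ∈ PolymatroidRegion n ∧ h ≠ 0 ∧
  ∀ h₁ h₂ : Finset (Fin n) → ℝ, h₁ ∈ PolymatroidRegion n → h₂ ∈ PolymatroidRegion n →
    (∃ c : ℝ, 0 ≤ c ∧ h₁ + h₂ = c • h) →
    (∃ c₁ : ℝ, 0 ≤ c₁ ∧ h₁ = c₁ • h) ∧ (∃ c₂ : ℝ, 0 ≤ c₂ ∧ h₂ = c₂ • h)

/-- `F ⊆ Γ_n` is a face of `Γ_n` if whenever `h₁, h₂ ∈ Γ_n` and `h₁ + h₂ ∈ F`,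
both `h₁` and `h₂` lie in `F`. -/
def IsFace (n : ℕ) (F : Set (Finset (Fin n) → ℝ)) : Prop :=
  F ⊆ PolymatroidRegion n ∧
  ∀ h₁ h₂ : Finset (Fin n) → ℝ, h₁ ∈ PolymatroidRegion n → h₂ ∈ PolymatroidRegion n →
    h₁ + h₂ ∈ F → h₁ ∈ F ∧ h₂ ∈ F

/-- A matroid on ground set `N_n`, given by its rank function. -/
structure MatroidRk (n : ℕ) where
  r : Finset (Fin n) → ℕ
  le_card : ∀ A, r A ≤ A.card
  mono : ∀ ⦃A B : Finset (Fin n)⦄, A ⊆ B → r A ≤ r B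
  submod : ∀ A B : Finset (Fin n), r (A ∩ B) + r (A ∪ B) ≤ r A + r B

/-- The rank function of a matroid, viewed as a real-valued set function. -/
def MatroidRk.rr {n : ℕ} (M : MatroidRk n) : Finset (Fin n) → ℝ :=
  fun A => (M.r A : ℝ)

/-- A set is independent if its rank equals its cardinality. -/
def MatroidRk.Indep {n : ℕ} (M : MatroidRk n) (A : Finset (Fin n)) : Prop :=
  M.r A = A.card

/-- A circuit is a minimal dependent set. -/
def MatroidRk.IsCircuit {n : ℕ} (M : MatroidRk n) (C : Finset (Fin n)) : Prop :=
  ¬ M.Indep C ∧ ∀ A ⊂ C, M.Indep A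

/-- An element is a loop if its rank is zero. -/
def MatroidRk.IsLoop {n : ℕ} (M : MatroidRk n) (e : Fin n) : Prop :=
  M.r {e} = 0

/-- Two distinct elements are parallel if each has rank one and together they have rank one. -/
def MatroidRk.Parallel {n : ℕ} (M : MatroidRk n) (e f : Fin n) : Prop :=
  e ≠ f ∧ M.r {e} = 1 ∧ M.r {f} = 1 ∧ M.r {e, f} = 1

/-- The subset `{1, …, k}` of `N_n` (in `Fin n`, the elements with value `< k`). -/
def alphaSet (n k : ℕ) : Finset (Fin n) :=
  Finset.univ.filter (fun i => (i : ℕ) < k)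

/-- The rank function of the rank-one matroid `U_{1,k}^n`:
`A ↦ 1` if `A ∩ {1, …, k} ≠ ∅` and `0` otherwise. -/
def rUone (n k : ℕ) : Finset (Fin n) → ℝ :=
  fun A => if (A ∩ alphaSet n k).Nonempty then 1 else 0

/-- The rank function of the uniform matroid `U_{n-1,n}`: `A ↦ min (n-1) |A|`. -/
def rUnif (n : ℕ) : Finset (Fin n) → ℝ :=
  fun A => ((min (n - 1) A.card : ℕ) : ℝ)

/-- The p-characteristic set `χ_M` of a matroid `M`. -/
def chi {n : ℕ} (M : MatroidRk n) : Set ℤ :=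
  {v | 2 ≤ v ∧ IsEntropic (fun A => Real.log (v : ℝ) * M.rr A)}

/-- any nonzero `h` spanning an extreme ray of `Γ_n` is modular or tight. -/
theorem stmt0 (n : ℕ) (hn : 1 ≤ n) (h : Finset (Fin n) → ℝ)
    (hext : SpansExtremeRay h) :
    (∀ A : Finset (Fin n), h A = ∑ i ∈ A, h {i}) ∨
    (∀ i : Fin n, h Finset.univ = h (Finset.univ.erase i)) := by
  obtain ⟨⟨h0, hpos, hmono, hsub⟩, hne, hray⟩ := hext
  by_cases htight : ∀ i : Fin n, h Finset.univ = h (Finset.univ.erase i)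
  · exact Or.inr htight
  left
  push_neg at htight
  obtain ⟨i, hi⟩ := htight
  have hle : h (Finset.univ.erase i) ≤ h Finset.univ :=
    hmono _ _ (Finset.erase_subset _ _)
  set c : ℝ := h Finset.univ - h (Finset.univ.erase i) with hc
  have hcpos : 0 < c := by
    rcases lt_or_eq_of_le hle with hlt | heq
    · simpa [hc] using sub_pos.mpr hlt
    · exact absurd heq.symm hi
  set h₂ : Finset (Fin n) → ℝ := fun A => if i ∈ A then c else 0 with hh₂
  set h₁ : Finset (Fin n) → ℝ := fun A => h A - h₂ A with hh₁
  -- key inequality: adding i raises h by at least c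
  have key : ∀ A : Finset (Fin n), i ∉ A → c ≤ h (insert i A) - h A := by
    intro A hiA
    have hsubAB := hsub (insert i A) (Finset.univ.erase i)
    have hinter : insert i A ∩ Finset.univ.erase i = A := by
      ext x
      simp only [Finset.mem_inter, Finset.mem_insert, Finset.mem_erase,
        Finset.mem_univ, and_true]
      constructor
      · rintro ⟨hx | hx, hxi⟩
        · exact absurd hx hxi
        · exact hx
      · intro hx
        exact ⟨Or.inr hx, fun hxe => hiA (hxe ▸ hx)⟩
    have hunion : insert i A ∪ Finset.univ.erase i = Finset.univ := by
      ext x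
      simp only [Finset.mem_union, Finset.mem_insert, Finset.mem_erase,
        Finset.mem_univ, and_true, iff_true]
      by_cases hx : x = i
      · exact Or.inl (Or.inl hx)
      · exact Or.inr hx
    rw [hinter, hunion] at hsubAB
    simp only [hc]
    linarith
  -- h₂ modular identity
  have h₂mod : ∀ A B : Finset (Fin n), h₂ (A ∩ B) + h₂ (A ∪ B) = h₂ A + h₂ B := by
    intro A B
    simp only [hh₂, Finset.mem_inter, Finset.mem_union]
    by_cases hA : i ∈ A <;> by_cases hB : i ∈ B <;> simp [hA, hB]
  -- h₂ in region
  have h₂mem : h₂ ∈ PolymatroidRegion n := by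
    refine ⟨by simp [hh₂], fun A => ?_, fun A B hAB => ?_, fun A B => ?_⟩
    · simp only [hh₂]; split_ifs <;> linarith
    · simp only [hh₂]
      by_cases hA : i ∈ A
      · simp [hA, hAB hA]
      · split_ifs <;> linarith
    · exact le_of_eq (h₂mod A B)
  -- h₁ monotone
  have h₁mono : ∀ A B : Finset (Fin n), A ⊆ B → h₁ A ≤ h₁ B := by
    intro A B hAB
    simp only [hh₁, hh₂]
    by_cases hA : i ∈ A
    · simp only [hA, hAB hA, if_true]
      linarith [hmono A B hAB]
    · by_cases hB : i ∈ B
      · simp only [hA, hB, if_true, if_false]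
        have h1 := key A hA
        have h2 : insert i A ⊆ B := Finset.insert_subset hB hAB
        have := hmono _ _ h2
        linarith
      · simp only [hA, hB, if_false]
        linarith [hmono A B hAB]
  have h₁empty : h₁ ∅ = 0 := by simp [hh₁, hh₂, h0]
  have h₁mem : h₁ ∈ PolymatroidRegion n := by
    refine ⟨h₁empty, fun A => ?_, h₁mono, fun A B => ?_⟩
    · have := h₁mono ∅ A (Finset.empty_subset A)
      rwa [h₁empty] at this
    · simp only [hh₁]
      have := hsub A B
      have := h₂mod A B
      linarith
  have hsum : h₁ + h₂ = (1 : ℝ) • h := by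
    funext A
    simp [hh₁]
  obtain ⟨-, c₂, hc₂nn, hc₂⟩ := hray h₁ h₂ h₁mem h₂mem ⟨1, by norm_num, hsum⟩
  -- h₂ {i} = c ≠ 0
  have h₂i : h₂ {i} = c := by simp [hh₂]
  have hh : c = c₂ * h {i} := by
    have := congrFun hc₂ {i}
    rw [h₂i] at this
    simpa using this
  have hc₂pos : 0 < c₂ := by
    rcases lt_or_eq_of_le hc₂nn with h' | h'
    · exact h'
    · exfalso; rw [← h'] at hh; simp at hh; linarith
  -- h A = h₂ A / c₂
  have hform : ∀ A : Finset (Fin n), h A = (if i ∈ A then c / c₂ else 0) := by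
    intro A
    have := congrFun hc₂ A
    simp only [hh₂, Pi.smul_apply, smul_eq_mul] at this
    by_cases hA : i ∈ A
    · simp only [hA, if_true] at this ⊢
      field_simp
      linarith
    · simp only [hA, if_false] at this ⊢
      have := this.symm
      rcases mul_eq_zero.mp this with h' | h'
      · exact absurd h' (ne_of_gt hc₂pos)
      · exact h'
  intro A
  rw [hform A]
  have : ∀ j ∈ A, h {j} = if j = i then c / c₂ else 0 := by
    intro j _
    rw [hform {j}]
    simp [Finset.mem_singleton, eq_comm]
  rw [Finset.sum_congr rfl this, Finset.sum_ite_eq' A i (fun _ => c / c₂)]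
end

section
/- Let n ≥ 2 and let h ∈ Γ_n be nonzero, span an extreme ray of Γ_n, and not be a nonnegative multiple of r_{U_{1,1}^n}. Then h and r_{U_{1,1}^n} are linearly independent and the cone F = {a·h + b·r_{U_{1,1}^n} : a, b ≥ 0} is a face of Γ_n (hence a 2-dimensional face). -/
open Finset

lemma rUone_eq {n : ℕ} (hn : 0 < n) (A : Finset (Fin n)) :
    rUone n 1 A = if (⟨0, hn⟩ : Fin n) ∈ A then 1 else 0 := by
  have hiff : (A ∩ alphaSet n 1).Nonempty ↔ (⟨0, hn⟩ : Fin n) ∈ A := by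
    constructor
    · rintro ⟨x, hx⟩
      simp only [alphaSet, Finset.mem_inter, Finset.mem_filter, Finset.mem_univ,
        true_and] at hx
      have hx0 : x = (⟨0, hn⟩ : Fin n) := by
        apply Fin.ext
        show (x : ℕ) = 0
        omega
      exact hx0 ▸ hx.1
    · intro h0
      exact ⟨_, Finset.mem_inter.2 ⟨h0, by simp [alphaSet]⟩⟩
  simp only [rUone, hiff]

lemma scale_mem {n : ℕ} {g : Finset (Fin n) → ℝ} (hg : g ∈ PolymatroidRegion n)
    {c : ℝ} (hc : 0 ≤ c) : c • g ∈ PolymatroidRegion n := by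
  obtain ⟨h0, hpos, hmono, hsub⟩ := hg
  refine ⟨by simp [h0], fun A => by simpa using mul_nonneg hc (hpos A),
    fun A B hAB => by simpa using mul_le_mul_of_nonneg_left (hmono A B hAB) hc,
    fun A B => ?_⟩
  have := mul_le_mul_of_nonneg_left (hsub A B) hc
  simp only [Pi.smul_apply, smul_eq_mul]
  nlinarith [this]

lemma add_mem_pm {n : ℕ} {g₁ g₂ : Finset (Fin n) → ℝ}
    (hg₁ : g₁ ∈ PolymatroidRegion n) (hg₂ : g₂ ∈ PolymatroidRegion n) :
    g₁ + g₂ ∈ PolymatroidRegion n := by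
  obtain ⟨h0, hpos, hmono, hsub⟩ := hg₁
  obtain ⟨h0', hpos', hmono', hsub'⟩ := hg₂
  refine ⟨by simp [h0, h0'], fun A => by simpa using add_nonneg (hpos A) (hpos' A),
    fun A B hAB => ?_, fun A B => ?_⟩
  · simp only [Pi.add_apply]
    exact add_le_add (hmono A B hAB) (hmono' A B hAB)
  · simp only [Pi.add_apply]
    have := hsub A B
    have := hsub' A B
    linarith

lemma tighten_mem {n : ℕ} (e0 : Fin n) {g : Finset (Fin n) → ℝ}
    (hg : g ∈ PolymatroidRegion n) :
    (fun A => g A - (if e0 ∈ A then (g Finset.univ - g (Finset.univ.erase e0)) else 0))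
      ∈ PolymatroidRegion n := by
  obtain ⟨h0, hpos, hmono, hsub⟩ := hg
  set lam : ℝ := g Finset.univ - g (Finset.univ.erase e0) with hlam
  have key : ∀ A : Finset (Fin n), e0 ∈ A → lam ≤ g A - g (A.erase e0) := by
    intro A hA
    have hinter : A ∩ (Finset.univ.erase e0) = A.erase e0 := by
      ext x
      simp only [Finset.mem_inter, Finset.mem_erase, Finset.mem_univ, and_true]
      tauto
    have hunion : A ∪ (Finset.univ.erase e0) = Finset.univ := by
      ext x
      simp only [Finset.mem_union, Finset.mem_erase, Finset.mem_univ, and_true,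
        iff_true]
      by_cases hx : x = e0
      · exact Or.inl (hx ▸ hA)
      · exact Or.inr hx
    have := hsub A (Finset.univ.erase e0)
    rw [hinter, hunion] at this
    simp only [hlam]
    linarith
  refine ⟨by simp [h0], fun A => ?_, fun A B hAB => ?_, fun A B => ?_⟩
  · by_cases hA : e0 ∈ A
    · simp only [hA, if_true]
      have := key A hA
      have := hpos (A.erase e0)
      linarith
    · simp only [hA, if_false]
      simpa using hpos A
  · by_cases hB : e0 ∈ B
    · by_cases hA : e0 ∈ A
      · simp only [hA, hB, if_true]
        have := hmono A B hAB
        linarith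
      · simp only [hA, hB, if_true, if_false]
        have hsub2 : A ⊆ B.erase e0 := by
          intro x hx
          exact Finset.mem_erase.2 ⟨fun hxe => hA (hxe ▸ hx), hAB hx⟩
        have := hmono A (B.erase e0) hsub2
        have := key B hB
        linarith
    · have hA : e0 ∉ A := fun hA => hB (hAB hA)
      simp only [hA, hB, if_false]
      have := hmono A B hAB
      linarith
  · have := hsub A B
    by_cases hA : e0 ∈ A <;> by_cases hB : e0 ∈ B <;>
      simp only [Finset.mem_inter, Finset.mem_union, hA, hB, and_true, and_false,
        true_and, false_and, or_true, true_or, or_false, false_or, if_true, if_false] <;>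
      linarith

/-- if `h` spans an extreme ray of `Γ_n` and is not a nonnegative multiple of
`r_{U_{1,1}^n}`, then `h` and `r_{U_{1,1}^n}` are linearly independent and the cone they span
is a face of `Γ_n`. -/
theorem stmt1 (n : ℕ) (hn : 2 ≤ n) (h : Finset (Fin n) → ℝ)
    (hext : SpansExtremeRay h)
    (hnm : ¬ ∃ c : ℝ, 0 ≤ c ∧ h = c • rUone n 1) :
    LinearIndependent ℝ ![h, rUone n 1] ∧
    IsFace n {g | ∃ a b : ℝ, 0 ≤ a ∧ 0 ≤ b ∧ g = a • h + b • rUone n 1} := by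
  have hn0 : 0 < n := by omega
  set e0 : Fin n := ⟨0, hn0⟩ with he0
  set r : Finset (Fin n) → ℝ := rUone n 1 with hr
  have hrA : ∀ A, r A = if e0 ∈ A then 1 else 0 := rUone_eq hn0
  obtain ⟨hΓ, hne, hkey⟩ := hext
  -- r ∈ Γ
  have hrΓ : r ∈ PolymatroidRegion n := by
    refine ⟨by simp [hrA], fun A => ?_, fun A B hAB => ?_, fun A B => ?_⟩
    · rw [hrA]; split <;> norm_num
    · rw [hrA, hrA]
      by_cases hA : e0 ∈ A
      · simp [hA, hAB hA]
      · simp only [hA, if_false]; split <;> norm_num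
    · rw [hrA, hrA, hrA, hrA]
      by_cases hA : e0 ∈ A <;> by_cases hB : e0 ∈ B <;>
        simp [Finset.mem_inter, Finset.mem_union, hA, hB]
  -- the linear functional lam
  set lam : (Finset (Fin n) → ℝ) → ℝ :=
    fun g => g Finset.univ - g (Finset.univ.erase e0) with hlamdef
  have hlam_r : lam r = 1 := by
    simp [hlamdef, hrA, Finset.mem_erase]
  have hlam_nonneg : ∀ g ∈ PolymatroidRegion n, 0 ≤ lam g := by
    intro g hg
    have := hg.2.2.1 (Finset.univ.erase e0) Finset.univ (Finset.erase_subset _ _)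
    simp only [hlamdef]
    linarith
  -- tightening
  have hTdef : ∀ g : Finset (Fin n) → ℝ,
      (fun A => g A - (if e0 ∈ A then lam g else 0)) = g - lam g • r := by
    intro g
    funext A
    simp only [Pi.sub_apply, Pi.smul_apply, smul_eq_mul, hrA A]
    split <;> ring
  have hT : ∀ g ∈ PolymatroidRegion n, g - lam g • r ∈ PolymatroidRegion n := by
    intro g hg
    rw [← hTdef g]
    exact tighten_mem e0 hg
  -- lam h = 0
  have hlam_h : lam h = 0 := by
    have hsum : (h - lam h • r) + (lam h • r) = (1 : ℝ) • h := by
      funext A; simp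
    obtain ⟨_, c₂, hc₂, heq₂⟩ :=
      hkey (h - lam h • r) (lam h • r) (hT h hΓ) (scale_mem hrΓ (hlam_nonneg h hΓ))
        ⟨1, by norm_num, hsum⟩
    by_cases hc20 : c₂ = 0
    · rw [hc20, zero_smul] at heq₂
      have := congrFun heq₂ Finset.univ
      simp only [Pi.smul_apply, smul_eq_mul, Pi.zero_apply, hrA] at this
      simpa [Finset.mem_univ] using this
    · exfalso
      apply hnm
      refine ⟨lam h / c₂, div_nonneg (hlam_nonneg h hΓ) hc₂, ?_⟩
      have hc2pos : (0 : ℝ) < c₂ := lt_of_le_of_ne hc₂ (Ne.symm hc20)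
      funext A
      have := congrFun heq₂ A
      simp only [Pi.smul_apply, smul_eq_mul] at this ⊢
      field_simp
      linarith
  -- linear independence
  constructor
  · rw [LinearIndependent.pair_iff]
    intro s t hst
    have h1 := congrFun hst Finset.univ
    have h2 := congrFun hst (Finset.univ.erase e0)
    simp only [Pi.add_apply, Pi.smul_apply, smul_eq_mul, Pi.zero_apply, hrA] at h1 h2
    rw [if_pos (Finset.mem_univ e0)] at h1
    rw [if_neg (by simp)] at h2
    have hlh : h Finset.univ = h (Finset.univ.erase e0) := by
      have := hlam_h
      simp only [hlamdef] at this
      linarith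
    have ht0 : t = 0 := by
      rw [hlh] at h1
      linarith
    refine ⟨?_, ht0⟩
    rw [ht0] at hst
    simp only [zero_smul, add_zero] at hst
    rcases smul_eq_zero.1 hst with hs | hh
    · exact hs
    · exact absurd hh hne
  -- face
  constructor
  · rintro g ⟨a, b, ha, hb, rfl⟩
    exact add_mem_pm (scale_mem hΓ ha) (scale_mem hrΓ hb)
  · rintro h₁ h₂ hm₁ hm₂ ⟨a, b, ha, hb, heq⟩
    -- lam is additive; lam (h₁+h₂) = b
    have hlam_add : lam h₁ + lam h₂ = b := by
      have e1 := congrFun heq Finset.univ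
      have e2 := congrFun heq (Finset.univ.erase e0)
      simp only [Pi.add_apply, Pi.smul_apply, smul_eq_mul, hrA] at e1 e2
      rw [if_pos (Finset.mem_univ e0)] at e1
      rw [if_neg (by simp)] at e2
      have hlh : h Finset.univ = h (Finset.univ.erase e0) := by
        have := hlam_h
        simp only [hlamdef] at this
        linarith
      simp only [hlamdef]
      rw [hlh] at e1
      linarith
    -- T h₁ + T h₂ = a • h
    have hTsum : (h₁ - lam h₁ • r) + (h₂ - lam h₂ • r) = a • h := by
      funext A
      have := congrFun heq A
      simp only [Pi.add_apply, Pi.smul_apply, smul_eq_mul] at this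
      simp only [Pi.add_apply, Pi.sub_apply, Pi.smul_apply, smul_eq_mul]
      have : h₁ A + h₂ A = a * h A + b * r A := this
      rw [← hlam_add] at this
      linarith [this]
    obtain ⟨⟨c₁, hc₁, heq₁⟩, ⟨c₂, hc₂, heq₂⟩⟩ :=
      hkey (h₁ - lam h₁ • r) (h₂ - lam h₂ • r) (hT h₁ hm₁) (hT h₂ hm₂) ⟨a, ha, hTsum⟩
    constructor
    · exact ⟨c₁, lam h₁, hc₁, hlam_nonneg h₁ hm₁, by
        funext A
        have := congrFun heq₁ A
        simp only [Pi.sub_apply, Pi.add_apply, Pi.smul_apply, smul_eq_mul] at this ⊢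
        linarith⟩
    · exact ⟨c₂, lam h₂, hc₂, hlam_nonneg h₂ hm₂, by
        funext A
        have := congrFun heq₂ A
        simp only [Pi.sub_apply, Pi.add_apply, Pi.smul_apply, smul_eq_mul] at this ⊢
        linarith⟩
end

section
/- Let M be a matroid on N_n with r_M(N_n) ≥ 2 whose rank function spans an extreme ray of Γ_n, and let a, b > 0. If a·r_M + b·r_{U_{1,1}^n} is entropic, then a = log v for some integer v ≥ 2. -/
open Finset

section Prob
variable {Ω : Type} [Fintype Ω] {α β γ : Type} [DecidableEq α] [DecidableEq β] [DecidableEq γ]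

/-- Mass of the fiber of `Y` over `s`. -/
noncomputable def Qm (p : Ω → ℝ) (Y : Ω → α) (s : α) : ℝ :=
  ∑ ω ∈ Finset.univ.filter (fun ω => Y ω = s), p ω

variable {p : Ω → ℝ}

lemma Qm_nonneg (hp : ∀ ω, 0 ≤ p ω) (Y : Ω → α) (s : α) : 0 ≤ Qm p Y s :=
  Finset.sum_nonneg fun ω _ => hp ω

lemma le_Qm (hp : ∀ ω, 0 ≤ p ω) (Y : Ω → α) (ω : Ω) : p ω ≤ Qm p Y (Y ω) :=
  Finset.single_le_sum (fun ω _ => hp ω) (by simp)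

lemma Qm_pos (hp : ∀ ω, 0 ≤ p ω) (Y : Ω → α) {ω : Ω} (h : 0 < p ω) : 0 < Qm p Y (Y ω) :=
  lt_of_lt_of_le h (le_Qm hp Y ω)

lemma Qm_congr {Y : Ω → α} {Z : Ω → β} {s : α} {t : β} (h : ∀ ω, Y ω = s ↔ Z ω = t) :
    Qm p Y s = Qm p Z t := by
  unfold Qm
  congr 1
  apply Finset.filter_congr
  intro ω _
  simpa using h ω

lemma exists_pos_of_Qm_pos (hp : ∀ ω, 0 ≤ p ω) {Y : Ω → α} {s : α} (h : 0 < Qm p Y s) :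
    ∃ ω, 0 < p ω ∧ Y ω = s := by
  by_contra hc
  push_neg at hc
  have : Qm p Y s = 0 := by
    apply Finset.sum_eq_zero
    intro ω hω
    simp only [Finset.mem_filter] at hω
    rcases lt_or_eq_of_le (hp ω) with h1 | h1
    · exact absurd hω.2 (hc ω h1)
    · exact h1.symm
  linarith

lemma Qm_le_Qm (hp : ∀ ω, 0 ≤ p ω) {Y : Ω → α} {Z : Ω → β} {s : α} {t : β}
    (h : ∀ ω, Y ω = s → Z ω = t) : Qm p Y s ≤ Qm p Z t := by
  apply Finset.sum_le_sum_of_subset_of_nonneg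
  · intro ω hω
    simp only [Finset.mem_filter, Finset.mem_univ, true_and] at *
    exact h ω hω
  · intro ω _ _; exact hp ω

/-- total mass of fibers over a set capturing the support -/
lemma sum_Qm (hp : ∀ ω, 0 ≤ p ω) (hs : ∑ ω, p ω = 1) (Y : Ω → α) (T : Finset α)
    (hT : ∀ ω, 0 < p ω → Y ω ∈ T) : ∑ s ∈ T, Qm p Y s = 1 := by
  unfold Qm
  rw [Finset.sum_fiberwise_eq_sum_filter Finset.univ T Y p]
  rw [← hs]
  apply Finset.sum_subset (Finset.filter_subset _ _)
  intro ω _ hω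
  simp only [Finset.mem_filter, Finset.mem_univ, true_and] at hω
  by_contra hne
  exact hω (hT ω (lt_of_le_of_ne (hp ω) (Ne.symm hne)))

lemma Hent_eq_sum_omega (hp : ∀ ω, 0 ≤ p ω) (Y : Ω → α) :
    Hent p Y = ∑ ω, p ω * (-(Real.log (Qm p Y (Y ω)))) := by
  rw [← Finset.sum_fiberwise_of_maps_to (fun ω _ => Finset.mem_image_of_mem Y (Finset.mem_univ ω))
    (fun ω => p ω * (-(Real.log (Qm p Y (Y ω)))))]
  unfold Hent
  apply Finset.sum_congr rfl
  intro s _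
  have : ∀ ω ∈ Finset.univ.filter (fun ω => Y ω = s),
      p ω * (-(Real.log (Qm p Y (Y ω)))) = p ω * (-(Real.log (Qm p Y s))) := by
    intro ω hω
    simp only [Finset.mem_filter] at hω
    rw [hω.2]
  rw [Finset.sum_congr rfl this, ← Finset.sum_mul]
  show Real.negMulLog (Qm p Y s) = (Qm p Y s) * (-(Real.log (Qm p Y s)))
  rw [Real.negMulLog]
  ring

/-- T1: data-processing equality implies determination. -/
lemma det_of_Hent_eq (hp : ∀ ω, 0 ≤ p ω) {Y : Ω → α} {f : α → β}
    (hH : Hent p (f ∘ Y) = Hent p Y) :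
    ∀ ω ω', 0 < p ω → 0 < p ω' → f (Y ω) = f (Y ω') → Y ω = Y ω' := by
  classical
  have hle : ∀ ω, Qm p Y (Y ω) ≤ Qm p (f ∘ Y) (f (Y ω)) := by
    intro ω
    exact Qm_le_Qm hp (fun ω' h => by simp [Function.comp, h])
  have hterm : ∀ ω, 0 ≤ p ω * (Real.log (Qm p (f ∘ Y) (f (Y ω))) - Real.log (Qm p Y (Y ω))) := by
    intro ω
    rcases lt_or_eq_of_le (hp ω) with h1 | h1
    · apply mul_nonneg (hp ω)
      have := Real.log_le_log (Qm_pos hp Y h1) (hle ω)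
      linarith
    · rw [← h1]; simp
  have hsum : ∑ ω, p ω * (Real.log (Qm p (f ∘ Y) (f (Y ω))) - Real.log (Qm p Y (Y ω))) = 0 := by
    have h1 := Hent_eq_sum_omega hp Y
    have h2 := Hent_eq_sum_omega hp (f ∘ Y)
    have : Hent p Y - Hent p (f ∘ Y) = 0 := by rw [hH]; ring
    rw [h1, h2, ← Finset.sum_sub_distrib] at this
    rw [← this]
    apply Finset.sum_congr rfl
    intro ω _
    simp only [Function.comp]
    ring
  have hkey : ∀ ω, 0 < p ω → Qm p (f ∘ Y) (f (Y ω)) = Qm p Y (Y ω) := by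
    intro ω hω
    have := (Finset.sum_eq_zero_iff_of_nonneg (fun ω _ => hterm ω)).1 hsum ω (Finset.mem_univ ω)
    have hlog : Real.log (Qm p (f ∘ Y) (f (Y ω))) = Real.log (Qm p Y (Y ω)) := by
      rcases mul_eq_zero.1 this with h | h
      · linarith
      · linarith
    have h1 : 0 < Qm p Y (Y ω) := Qm_pos hp Y hω
    have h2 : 0 < Qm p (f ∘ Y) (f (Y ω)) := Qm_pos hp (f ∘ Y) hω
    rw [← Real.exp_log h1, ← Real.exp_log h2, hlog]
  intro ω ω' hω hω' hf
  by_contra hne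
  have hsub : Qm p Y (Y ω) + Qm p Y (Y ω') ≤ Qm p (f ∘ Y) (f (Y ω)) := by
    unfold Qm
    rw [← Finset.sum_union]
    · apply Finset.sum_le_sum_of_subset_of_nonneg
      · intro x hx
        simp only [Finset.mem_union, Finset.mem_filter, Finset.mem_univ, true_and] at *
        rcases hx with h | h
        · simp [Function.comp, h]
        · simp [Function.comp, h, ← hf]
      · intro x _ _; exact hp x
    · rw [Finset.disjoint_filter]
      intro x _ hx1 hx2
      exact hne (hx1 ▸ hx2 ▸ rfl)
  have := hkey ω hω
  have h3 : 0 < Qm p Y (Y ω') := Qm_pos hp Y hω'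
  linarith

/-- T2: additivity of entropy implies independence (product of fiber masses). -/
lemma indep_of_Hent_add (hp : ∀ ω, 0 ≤ p ω) (hs : ∑ ω, p ω = 1) {Y : Ω → α}
    {f : α → β} {g : α → γ}
    (hinj : ∀ u v : α, f u = f v → g u = g v → u = v)
    (hH : Hent p Y = Hent p (f ∘ Y) + Hent p (g ∘ Y)) :
    ∀ ω, 0 < p ω → Qm p Y (Y ω) = Qm p (f ∘ Y) (f (Y ω)) * Qm p (g ∘ Y) (g (Y ω)) := by
  classical
  set supp := Finset.univ.filter (fun ω => 0 < p ω) with hsupp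
  have hsuppsum : ∑ ω ∈ supp, p ω = 1 := by
    rw [← hs]
    apply Finset.sum_subset (Finset.filter_subset _ _)
    intro ω _ hω
    simp only [hsupp, Finset.mem_filter, Finset.mem_univ, true_and] at hω
    linarith [hp ω, lt_or_eq_of_le (hp ω)]
  have hmem_supp : ∀ ω, 0 < p ω → ω ∈ supp := by
    intro ω h; simp [hsupp, h]
  have hsum_supp : ∀ (F : Ω → ℝ), (∀ ω, p ω = 0 → F ω = 0) →
      ∑ ω ∈ supp, F ω = ∑ ω, F ω := by
    intro F hF
    apply Finset.sum_subset (Finset.filter_subset _ _)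
    intro ω _ hω
    simp only [hsupp, Finset.mem_filter, Finset.mem_univ, true_and] at hω
    exact hF ω (le_antisymm (not_lt.1 hω) (hp ω))
  have hfib : ∀ (s : α), ∑ ω ∈ supp.filter (fun ω => Y ω = s), p ω = Qm p Y s := by
    intro s
    unfold Qm
    apply Finset.sum_subset
    · intro ω hω
      simp only [hsupp, Finset.mem_filter, Finset.mem_univ, true_and] at *
      exact hω.2
    · intro ω hω₁ hω₂
      have hY : Y ω = s := by simpa using hω₁
      by_contra hne
      have hpos : 0 < p ω := lt_of_le_of_ne (hp ω) (Ne.symm hne)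
      exact hω₂ (by simp [hsupp, hpos, hY])
  set Qf : α → ℝ := fun s => Qm p (f ∘ Y) (f s) with hQf
  set Qg : α → ℝ := fun s => Qm p (g ∘ Y) (g s) with hQg
  set QY : α → ℝ := fun s => Qm p Y s with hQY
  have hQYpos : ∀ ω ∈ supp, 0 < QY (Y ω) := by
    intro ω hω
    simp only [hsupp, Finset.mem_filter, Finset.mem_univ, true_and] at hω
    exact Qm_pos hp Y hω
  have hQfpos : ∀ ω ∈ supp, 0 < Qf (Y ω) := by
    intro ω hω
    simp only [hsupp, Finset.mem_filter, Finset.mem_univ, true_and] at hω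
    exact Qm_pos hp (f ∘ Y) hω
  have hQgpos : ∀ ω ∈ supp, 0 < Qg (Y ω) := by
    intro ω hω
    simp only [hsupp, Finset.mem_filter, Finset.mem_univ, true_and] at hω
    exact Qm_pos hp (g ∘ Y) hω
  -- Step 1
  have step1 : ∑ ω ∈ supp, p ω * (Qf (Y ω) * Qg (Y ω) / QY (Y ω)) ≤ 1 := by
    have h1 : ∑ ω ∈ supp, p ω * (Qf (Y ω) * Qg (Y ω) / QY (Y ω))
        = ∑ s ∈ supp.image Y, Qf s * Qg s := by
      rw [← Finset.sum_fiberwise_of_maps_to (fun ω (hω : ω ∈ supp) =>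
        Finset.mem_image_of_mem Y hω)
        (fun ω => p ω * (Qf (Y ω) * Qg (Y ω) / QY (Y ω)))]
      apply Finset.sum_congr rfl
      intro s hs
      obtain ⟨ω₀, hω₀, hYω₀⟩ := Finset.mem_image.1 hs
      have hQYs : 0 < QY s := hYω₀ ▸ hQYpos ω₀ hω₀
      have hc : ∀ ω ∈ supp.filter (fun ω => Y ω = s),
          p ω * (Qf (Y ω) * Qg (Y ω) / QY (Y ω)) = p ω * (Qf s * Qg s / QY s) := by
        intro ω hω
        rw [(Finset.mem_filter.1 hω).2]
      rw [Finset.sum_congr rfl hc, ← Finset.sum_mul, hfib s]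
      show QY s * _ = _
      rw [mul_comm]
      exact div_mul_cancel₀ _ (ne_of_gt hQYs)
    rw [h1]
    have hinj' : ∀ s ∈ supp.image Y, ∀ t ∈ supp.image Y,
        (f s, g s) = (f t, g t) → s = t := fun s _ t _ h =>
      hinj s t (congrArg Prod.fst h) (congrArg Prod.snd h)
    have h2 : ∑ s ∈ supp.image Y, Qf s * Qg s
        = ∑ x ∈ (supp.image Y).image (fun s => (f s, g s)),
            Qm p (f ∘ Y) x.1 * Qm p (g ∘ Y) x.2 := by
      rw [Finset.sum_image hinj']
    rw [h2]
    have hsub : (supp.image Y).image (fun s => (f s, g s)) ⊆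
        (Finset.univ.image (f ∘ Y)) ×ˢ (Finset.univ.image (g ∘ Y)) := by
      intro x hx
      obtain ⟨s, hs, rfl⟩ := Finset.mem_image.1 hx
      obtain ⟨ω, _, rfl⟩ := Finset.mem_image.1 hs
      exact Finset.mem_product.2 ⟨Finset.mem_image_of_mem _ (Finset.mem_univ ω),
        Finset.mem_image_of_mem _ (Finset.mem_univ ω)⟩
    have h3 : ∑ x ∈ (supp.image Y).image (fun s => (f s, g s)),
        Qm p (f ∘ Y) x.1 * Qm p (g ∘ Y) x.2
        ≤ ∑ x ∈ (Finset.univ.image (f ∘ Y)) ×ˢ (Finset.univ.image (g ∘ Y)),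
            Qm p (f ∘ Y) x.1 * Qm p (g ∘ Y) x.2 := by
      apply Finset.sum_le_sum_of_subset_of_nonneg hsub
      intro x _ _
      exact mul_nonneg (Qm_nonneg hp _ _) (Qm_nonneg hp _ _)
    have h4 : ∑ x ∈ (Finset.univ.image (f ∘ Y)) ×ˢ (Finset.univ.image (g ∘ Y)),
        Qm p (f ∘ Y) x.1 * Qm p (g ∘ Y) x.2 = 1 := by
      rw [Finset.sum_product]
      have : ∀ b, ∑ c ∈ Finset.univ.image (g ∘ Y), Qm p (f ∘ Y) b * Qm p (g ∘ Y) c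
          = Qm p (f ∘ Y) b := by
        intro b
        rw [← Finset.mul_sum, sum_Qm hp hs (g ∘ Y) _
          (fun ω _ => Finset.mem_image_of_mem _ (Finset.mem_univ ω)), mul_one]
      rw [Finset.sum_congr rfl (fun b _ => this b)]
      exact sum_Qm hp hs (f ∘ Y) _ (fun ω _ => Finset.mem_image_of_mem _ (Finset.mem_univ ω))
    linarith
  -- Step 2
  have hD : ∑ ω ∈ supp, p ω * (Real.log (Qf (Y ω) * Qg (Y ω)) - Real.log (QY (Y ω))) = 0 := by
    have e1 : Hent p Y = ∑ ω ∈ supp, p ω * (-(Real.log (QY (Y ω)))) := by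
      rw [Hent_eq_sum_omega hp Y]
      exact (hsum_supp _ (fun ω h => by rw [h]; ring)).symm
    have e2 : Hent p (f ∘ Y) = ∑ ω ∈ supp, p ω * (-(Real.log (Qf (Y ω)))) := by
      rw [Hent_eq_sum_omega hp (f ∘ Y)]
      exact (hsum_supp _ (fun ω h => by rw [h]; ring)).symm
    have e3 : Hent p (g ∘ Y) = ∑ ω ∈ supp, p ω * (-(Real.log (Qg (Y ω)))) := by
      rw [Hent_eq_sum_omega hp (g ∘ Y)]
      exact (hsum_supp _ (fun ω h => by rw [h]; ring)).symm
    have hsplit : ∀ ω ∈ supp, p ω * (Real.log (Qf (Y ω) * Qg (Y ω)) - Real.log (QY (Y ω)))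
        = p ω * (-(Real.log (QY (Y ω)))) - p ω * (-(Real.log (Qf (Y ω))))
          - p ω * (-(Real.log (Qg (Y ω)))) := by
      intro ω hω
      rw [Real.log_mul (ne_of_gt (hQfpos ω hω)) (ne_of_gt (hQgpos ω hω))]
      ring
    rw [Finset.sum_congr rfl hsplit, Finset.sum_sub_distrib, Finset.sum_sub_distrib,
      ← e1, ← e2, ← e3, hH]
    ring
  -- Step 3
  have hterm : ∀ ω ∈ supp,
      0 ≤ p ω * (Qf (Y ω) * Qg (Y ω) / QY (Y ω) - 1)
        - p ω * (Real.log (Qf (Y ω) * Qg (Y ω)) - Real.log (QY (Y ω))) := by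
    intro ω hω
    have hx : 0 < Qf (Y ω) * Qg (Y ω) / QY (Y ω) :=
      div_pos (mul_pos (hQfpos ω hω) (hQgpos ω hω)) (hQYpos ω hω)
    have hlog : Real.log (Qf (Y ω) * Qg (Y ω)) - Real.log (QY (Y ω))
        = Real.log (Qf (Y ω) * Qg (Y ω) / QY (Y ω)) :=
      (Real.log_div (ne_of_gt (mul_pos (hQfpos ω hω) (hQgpos ω hω)))
        (ne_of_gt (hQYpos ω hω))).symm
    rw [hlog, ← mul_sub]
    apply mul_nonneg
    · simp only [hsupp, Finset.mem_filter, Finset.mem_univ, true_and] at hω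
      exact le_of_lt hω
    · have := Real.log_le_sub_one_of_pos hx
      linarith
  have hsumterm : ∑ ω ∈ supp,
      (p ω * (Qf (Y ω) * Qg (Y ω) / QY (Y ω) - 1)
        - p ω * (Real.log (Qf (Y ω) * Qg (Y ω)) - Real.log (QY (Y ω)))) ≤ 0 := by
    rw [Finset.sum_sub_distrib, hD, sub_zero]
    have : ∑ ω ∈ supp, p ω * (Qf (Y ω) * Qg (Y ω) / QY (Y ω) - 1)
        = (∑ ω ∈ supp, p ω * (Qf (Y ω) * Qg (Y ω) / QY (Y ω))) - ∑ ω ∈ supp, p ω := by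
      rw [← Finset.sum_sub_distrib]
      apply Finset.sum_congr rfl
      intro ω _
      ring
    rw [this, hsuppsum]
    linarith
  have hzero : ∀ ω ∈ supp,
      p ω * (Qf (Y ω) * Qg (Y ω) / QY (Y ω) - 1)
        - p ω * (Real.log (Qf (Y ω) * Qg (Y ω)) - Real.log (QY (Y ω))) = 0 := by
    intro ω hω
    have := Finset.sum_eq_zero_iff_of_nonneg hterm
    have heq : ∑ ω ∈ supp,
        (p ω * (Qf (Y ω) * Qg (Y ω) / QY (Y ω) - 1)
          - p ω * (Real.log (Qf (Y ω) * Qg (Y ω)) - Real.log (QY (Y ω)))) = 0 :=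
      le_antisymm hsumterm (Finset.sum_nonneg hterm)
    exact (this.1 heq) ω hω
  intro ω hωpos
  have hω : ω ∈ supp := hmem_supp ω hωpos
  have h0 := hzero ω hω
  set x := Qf (Y ω) * Qg (Y ω) / QY (Y ω) with hxdef
  have hxpos : 0 < x := div_pos (mul_pos (hQfpos ω hω) (hQgpos ω hω)) (hQYpos ω hω)
  have hlog : Real.log (Qf (Y ω) * Qg (Y ω)) - Real.log (QY (Y ω)) = Real.log x :=
    (Real.log_div (ne_of_gt (mul_pos (hQfpos ω hω) (hQgpos ω hω)))
      (ne_of_gt (hQYpos ω hω))).symm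
  rw [hlog, ← mul_sub] at h0
  have hfac : x - 1 - Real.log x = 0 := by
    rcases mul_eq_zero.1 h0 with h | h
    · exact absurd h (ne_of_gt hωpos)
    · exact h
  have hx1 : x = 1 := by
    by_contra hne
    have := Real.log_lt_sub_one_of_pos hxpos hne
    linarith
  have : QY (Y ω) = Qf (Y ω) * Qg (Y ω) := by
    have hq : QY (Y ω) ≠ 0 := ne_of_gt (hQYpos ω hω)
    rw [hxdef, div_eq_one_iff_eq hq] at hx1
    linarith [hx1]
  exact this

/-- Counting lemma: under independence and mutual-determination constraints,
the fiber masses of `V` are bounded by `1 / |range U|`. -/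
lemma half_bound (hp : ∀ ω, 0 ≤ p ω) (hs : ∑ ω, p ω = 1)
    {W : Ω → α} {U : Ω → β} {V : Ω → γ}
    (hUV : ∀ ω, 0 < p ω →
      Qm p (fun ω' => (U ω', V ω')) (U ω, V ω) = Qm p U (U ω) * Qm p V (V ω))
    (hWU : ∀ ω, 0 < p ω →
      Qm p (fun ω' => (W ω', U ω')) (W ω, U ω) = Qm p W (W ω) * Qm p U (U ω))
    (hdetV : ∀ ω ω', 0 < p ω → 0 < p ω' → W ω = W ω' → U ω = U ω' → V ω = V ω')
    (hdetU : ∀ ω ω', 0 < p ω → 0 < p ω' → W ω = W ω' → V ω = V ω' → U ω = U ω') :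
    ∀ ω₀, 0 < p ω₀ →
      (((Finset.univ.filter (fun ω => 0 < p ω)).image U).card : ℝ) * Qm p V (V ω₀) ≤ 1 := by
  classical
  intro ω₀ hω₀
  set supp := Finset.univ.filter (fun ω : Ω => 0 < p ω) with hsupp
  have hmem_supp : ∀ ω, 0 < p ω → ω ∈ supp := by intro ω h; simp [hsupp, h]
  set SU := supp.image U with hSU
  set SV := supp.image V with hSV
  set SW := supp.image W with hSW
  have hposU : ∀ s ∈ SU, 0 < Qm p U s := by
    intro s hs'
    obtain ⟨ω, hω, rfl⟩ := Finset.mem_image.1 hs'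
    simp only [hsupp, Finset.mem_filter, Finset.mem_univ, true_and] at hω
    exact Qm_pos hp U hω
  have hposV : ∀ t ∈ SV, 0 < Qm p V t := by
    intro t ht'
    obtain ⟨ω, hω, rfl⟩ := Finset.mem_image.1 ht'
    simp only [hsupp, Finset.mem_filter, Finset.mem_univ, true_and] at hω
    exact Qm_pos hp V hω
  -- step G1 : every pair of values in SU × SV is attained with positive probability
  have G1 : ∀ s ∈ SU, ∀ t ∈ SV, ∃ ω, 0 < p ω ∧ U ω = s ∧ V ω = t := by
    have A1 : ∑ x ∈ supp.image (fun ω => (U ω, V ω)), Qm p (fun ω' => (U ω', V ω')) x = 1 :=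
      sum_Qm hp hs _ _ (fun ω hω => Finset.mem_image_of_mem _ (hmem_supp ω hω))
    have A2 : ∑ x ∈ supp.image (fun ω => (U ω, V ω)), Qm p U x.1 * Qm p V x.2 = 1 := by
      rw [← A1]
      apply Finset.sum_congr rfl
      intro x hx
      obtain ⟨ω, hω, rfl⟩ := Finset.mem_image.1 hx
      simp only [hsupp, Finset.mem_filter, Finset.mem_univ, true_and] at hω
      exact (hUV ω hω).symm
    have A3 : supp.image (fun ω => (U ω, V ω)) ⊆ SU ×ˢ SV := by
      intro x hx
      obtain ⟨ω, hω, rfl⟩ := Finset.mem_image.1 hx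
      exact Finset.mem_product.2 ⟨Finset.mem_image_of_mem _ hω, Finset.mem_image_of_mem _ hω⟩
    have A4 : ∑ x ∈ SU ×ˢ SV, Qm p U x.1 * Qm p V x.2 = 1 := by
      rw [Finset.sum_product]
      have : ∀ b, ∑ c ∈ SV, Qm p U b * Qm p V c = Qm p U b := by
        intro b
        rw [← Finset.mul_sum, sum_Qm hp hs V _
          (fun ω hω => Finset.mem_image_of_mem _ (hmem_supp ω hω)), mul_one]
      rw [Finset.sum_congr rfl (fun b _ => this b)]
      exact sum_Qm hp hs U _ (fun ω hω => Finset.mem_image_of_mem _ (hmem_supp ω hω))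
    have A5 : ∑ x ∈ (SU ×ˢ SV) \ (supp.image (fun ω => (U ω, V ω))),
        Qm p U x.1 * Qm p V x.2 = 0 := by
      have := Finset.sum_sdiff A3 (f := fun x : β × γ => Qm p U x.1 * Qm p V x.2)
      rw [A2, A4] at this
      linarith
    intro s hsS t htS
    have hmem : (s, t) ∈ supp.image (fun ω => (U ω, V ω)) := by
      by_contra hc
      have hin : (s, t) ∈ (SU ×ˢ SV) \ (supp.image (fun ω => (U ω, V ω))) :=
        Finset.mem_sdiff.2 ⟨Finset.mem_product.2 ⟨hsS, htS⟩, hc⟩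
      have := (Finset.sum_eq_zero_iff_of_nonneg
        (fun x _ => mul_nonneg (Qm_nonneg hp _ _) (Qm_nonneg hp _ _))).1 A5 (s, t) hin
      have h1 := hposU s hsS
      have h2 := hposV t htS
      simp only at this
      nlinarith
    obtain ⟨ω, hω, hωeq⟩ := Finset.mem_image.1 hmem
    simp only [hsupp, Finset.mem_filter, Finset.mem_univ, true_and] at hω
    exact ⟨ω, hω, congrArg Prod.fst hωeq, congrArg Prod.snd hωeq⟩
  set t := V ω₀ with ht
  have htS : t ∈ SV := Finset.mem_image_of_mem _ (hmem_supp ω₀ hω₀)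
  set Es : β → Finset α := fun s =>
    SW.filter (fun x => ∃ ω, 0 < p ω ∧ W ω = x ∧ U ω = s ∧ V ω = t) with hEs
  -- KEY : for every s in SU, Qm p V t = ∑_{x ∈ Es s} Qm p W x
  have KEY : ∀ s ∈ SU, Qm p V t = ∑ x ∈ Es s, Qm p W x := by
    intro s hsS
    obtain ⟨ω₁, hω₁, hU₁, hV₁⟩ := G1 s hsS t htS
    have B1 : Qm p (fun ω' => (U ω', V ω')) (s, t) = Qm p U s * Qm p V t := by
      have := hUV ω₁ hω₁
      rwa [hU₁, hV₁] at this
    have B2 : Qm p (fun ω' => (U ω', V ω')) (s, t)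
        = ∑ x ∈ SW, Qm p (fun ω => (W ω, U ω, V ω)) (x, s, t) := by
      have hfib : ∀ x : α, Finset.univ.filter (fun ω => (W ω, U ω, V ω) = (x, s, t))
          = (Finset.univ.filter (fun ω => (U ω, V ω) = (s, t))).filter (fun ω => W ω = x) := by
        intro x
        ext ω
        simp only [Finset.mem_filter, Finset.mem_univ, true_and, Prod.mk.injEq]
        tauto
      have : ∑ x ∈ SW, Qm p (fun ω => (W ω, U ω, V ω)) (x, s, t)
          = ∑ ω ∈ (Finset.univ.filter (fun ω => (U ω, V ω) = (s, t))).filter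
              (fun ω => W ω ∈ SW), p ω := by
        rw [← Finset.sum_fiberwise_eq_sum_filter _ SW W p]
        apply Finset.sum_congr rfl
        intro x _
        show Qm p _ _ = _
        unfold Qm
        rw [hfib x]
      rw [this]
      unfold Qm
      symm
      apply Finset.sum_subset (Finset.filter_subset _ _)
      intro ω hω₂ hω₃
      by_contra hne
      have hpos : 0 < p ω := lt_of_le_of_ne (hp ω) (Ne.symm hne)
      exact hω₃ (Finset.mem_filter.2 ⟨hω₂, Finset.mem_image_of_mem _ (hmem_supp ω hpos)⟩)
    have B3 : ∀ x ∈ SW, Qm p (fun ω => (W ω, U ω, V ω)) (x, s, t)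
        = if x ∈ Es s then Qm p W x * Qm p U s else 0 := by
      intro x hxSW
      by_cases hx : x ∈ Es s
      · rw [if_pos hx]
        obtain ⟨ω₂, hω₂, hW₂, hU₂, hV₂⟩ := (Finset.mem_filter.1 hx).2
        have C1 : Qm p (fun ω => (W ω, U ω, V ω)) (x, s, t)
            = Qm p (fun ω => (W ω, U ω)) (x, s) := by
          unfold Qm
          apply Finset.sum_subset
          · intro ω hω
            simp only [Finset.mem_filter, Finset.mem_univ, true_and, Prod.mk.injEq] at *
            exact ⟨hω.1, hω.2.1⟩
          · intro ω hω₂' hω₃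
            by_contra hne
            have hpos : 0 < p ω := lt_of_le_of_ne (hp ω) (Ne.symm hne)
            apply hω₃
            simp only [Finset.mem_filter, Finset.mem_univ, true_and, Prod.mk.injEq] at *
            refine ⟨hω₂'.1, hω₂'.2, ?_⟩
            exact (hdetV ω ω₂ hpos hω₂ (hω₂'.1.trans hW₂.symm) (hω₂'.2.trans hU₂.symm)).trans hV₂
        have C2 : Qm p (fun ω => (W ω, U ω)) (x, s) = Qm p W x * Qm p U s := by
          have := hWU ω₂ hω₂
          rwa [hW₂, hU₂] at this
        rw [C1, C2]
      · rw [if_neg hx]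
        apply Finset.sum_eq_zero
        intro ω hω
        simp only [Finset.mem_filter, Finset.mem_univ, true_and, Prod.mk.injEq] at hω
        by_contra hne
        have hpos : 0 < p ω := lt_of_le_of_ne (hp ω) (Ne.symm hne)
        exact hx (Finset.mem_filter.2 ⟨hxSW, ω, hpos, hω.1, hω.2.1, hω.2.2⟩)
    have B4 : Qm p U s * Qm p V t = (∑ x ∈ Es s, Qm p W x) * Qm p U s := by
      rw [← B1, B2, Finset.sum_congr rfl B3, Finset.sum_ite_mem, ← Finset.sum_mul]
      congr 1
      have : SW ∩ Es s = Es s := Finset.inter_eq_right.2 (Finset.filter_subset _ _)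
      rw [this]
    have hUpos := hposU s hsS
    have := B4
    field_simp at this
    nlinarith [this]
  -- disjointness of the Es
  have hdisj : ∀ s ∈ SU, ∀ s' ∈ SU, s ≠ s' → Disjoint (Es s) (Es s') := by
    intro s _ s' _ hne
    rw [Finset.disjoint_left]
    intro x hx hx'
    obtain ⟨ω, hω, hW, hU, hV⟩ := (Finset.mem_filter.1 hx).2
    obtain ⟨ω', hω', hW', hU', hV'⟩ := (Finset.mem_filter.1 hx').2
    exact hne ((hU.symm.trans (hdetU ω ω' hω hω' (hW.trans hW'.symm) (hV.trans hV'.symm))).trans hU')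
  -- final count
  have hcount : (SU.card : ℝ) * Qm p V t = ∑ x ∈ SU.biUnion Es, Qm p W x := by
    rw [Finset.sum_biUnion (fun s hs' s' hs'' hne => hdisj s hs' s' hs'' hne)]
    have he : ∑ s ∈ SU, ∑ x ∈ Es s, Qm p W x = ∑ _s ∈ SU, Qm p V t :=
      Finset.sum_congr rfl (fun s hs' => (KEY s hs').symm)
    rw [he, Finset.sum_const, nsmul_eq_mul]
  have hle : ∑ x ∈ SU.biUnion Es, Qm p W x ≤ ∑ x ∈ SW, Qm p W x := by
    apply Finset.sum_le_sum_of_subset_of_nonneg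
    · intro x hx
      obtain ⟨s, _, hxs⟩ := Finset.mem_biUnion.1 hx
      exact (Finset.mem_filter.1 hxs).1
    · intro x _ _; exact Qm_nonneg hp _ _
  have hSWsum : ∑ x ∈ SW, Qm p W x = 1 :=
    sum_Qm hp hs W _ (fun ω hω => Finset.mem_image_of_mem _ (hmem_supp ω hω))
  calc (SU.card : ℝ) * Qm p V t = ∑ x ∈ SU.biUnion Es, Qm p W x := hcount
    _ ≤ 1 := by rw [← hSWsum]; exact hle

/-- Main abstract lemma: entropy of `V` is the log of a positive integer. -/
lemma Hent_eq_log (hp : ∀ ω, 0 ≤ p ω) (hs : ∑ ω, p ω = 1)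
    {W : Ω → α} {U : Ω → β} {V : Ω → γ}
    (hUV : ∀ ω, 0 < p ω →
      Qm p (fun ω' => (U ω', V ω')) (U ω, V ω) = Qm p U (U ω) * Qm p V (V ω))
    (hWU : ∀ ω, 0 < p ω →
      Qm p (fun ω' => (W ω', U ω')) (W ω, U ω) = Qm p W (W ω) * Qm p U (U ω))
    (hWV : ∀ ω, 0 < p ω →
      Qm p (fun ω' => (W ω', V ω')) (W ω, V ω) = Qm p W (W ω) * Qm p V (V ω))
    (hdetV : ∀ ω ω', 0 < p ω → 0 < p ω' → W ω = W ω' → U ω = U ω' → V ω = V ω')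
    (hdetU : ∀ ω ω', 0 < p ω → 0 < p ω' → W ω = W ω' → V ω = V ω' → U ω = U ω') :
    ∃ v : ℕ, 1 ≤ v ∧ Hent p V = Real.log v := by
  classical
  set supp := Finset.univ.filter (fun ω : Ω => 0 < p ω) with hsupp
  have hmem_supp : ∀ ω, 0 < p ω → ω ∈ supp := by intro ω h; simp [hsupp, h]
  have hsupp_ne : ∃ ω₀, 0 < p ω₀ := by
    by_contra hc
    push_neg at hc
    have : ∑ ω, p ω = 0 := Finset.sum_eq_zero (fun ω _ => le_antisymm (hc ω) (hp ω))
    rw [hs] at this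
    norm_num at this
  obtain ⟨ω₀, hω₀⟩ := hsupp_ne
  set SU := supp.image U with hSU
  set SV := supp.image V with hSV
  have hSUne : SU.Nonempty := ⟨U ω₀, Finset.mem_image_of_mem _ (hmem_supp ω₀ hω₀)⟩
  have hSVne : SV.Nonempty := ⟨V ω₀, Finset.mem_image_of_mem _ (hmem_supp ω₀ hω₀)⟩
  have hSUpos : 0 < (SU.card : ℝ) := by exact_mod_cast Finset.card_pos.2 hSUne
  have hSVpos : 0 < (SV.card : ℝ) := by exact_mod_cast Finset.card_pos.2 hSVne
  have bound1 : ∀ ω, 0 < p ω → (SU.card : ℝ) * Qm p V (V ω) ≤ 1 :=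
    fun ω h => half_bound hp hs hUV hWU hdetV hdetU ω h
  have hVU : ∀ ω, 0 < p ω →
      Qm p (fun ω' => (V ω', U ω')) (V ω, U ω) = Qm p V (V ω) * Qm p U (U ω) := by
    intro ω h
    rw [mul_comm, ← hUV ω h]
    apply Qm_congr
    intro ω'
    constructor <;> intro hx <;>
      simp only [Prod.mk.injEq] at * <;> exact ⟨hx.2, hx.1⟩
  have bound2 : ∀ ω, 0 < p ω → (SV.card : ℝ) * Qm p U (U ω) ≤ 1 :=
    fun ω h => half_bound hp hs hVU hWV hdetU hdetV ω h
  have hsum1 : ∑ t ∈ SV, Qm p V t = 1 :=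
    sum_Qm hp hs V _ (fun ω hω => Finset.mem_image_of_mem _ (hmem_supp ω hω))
  have hsum2 : ∑ s ∈ SU, Qm p U s = 1 :=
    sum_Qm hp hs U _ (fun ω hω => Finset.mem_image_of_mem _ (hmem_supp ω hω))
  have hbV : ∀ t ∈ SV, Qm p V t ≤ 1 / (SU.card : ℝ) := by
    intro t ht
    obtain ⟨ω, hω, rfl⟩ := Finset.mem_image.1 ht
    simp only [hsupp, Finset.mem_filter, Finset.mem_univ, true_and] at hω
    rw [le_div_iff₀ hSUpos, mul_comm]
    exact bound1 ω hω
  have hbU : ∀ s ∈ SU, Qm p U s ≤ 1 / (SV.card : ℝ) := by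
    intro s hs'
    obtain ⟨ω, hω, rfl⟩ := Finset.mem_image.1 hs'
    simp only [hsupp, Finset.mem_filter, Finset.mem_univ, true_and] at hω
    rw [le_div_iff₀ hSVpos, mul_comm]
    exact bound2 ω hω
  have hcard1 : (SU.card : ℝ) ≤ SV.card := by
    have : (1 : ℝ) ≤ SV.card * (1 / SU.card) :=
      calc (1 : ℝ) = ∑ t ∈ SV, Qm p V t := hsum1.symm
        _ ≤ ∑ _t ∈ SV, 1 / (SU.card : ℝ) := Finset.sum_le_sum hbV
        _ = SV.card * (1 / SU.card) := by rw [Finset.sum_const, nsmul_eq_mul]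
    rw [mul_one_div, le_div_iff₀ hSUpos, one_mul] at this
    linarith
  have hcard2 : (SV.card : ℝ) ≤ SU.card := by
    have : (1 : ℝ) ≤ SU.card * (1 / SV.card) :=
      calc (1 : ℝ) = ∑ s ∈ SU, Qm p U s := hsum2.symm
        _ ≤ ∑ _s ∈ SU, 1 / (SV.card : ℝ) := Finset.sum_le_sum hbU
        _ = SU.card * (1 / SV.card) := by rw [Finset.sum_const, nsmul_eq_mul]
    rw [mul_one_div, le_div_iff₀ hSVpos, one_mul] at this
    linarith
  have hcards : (SU.card : ℝ) = SV.card := le_antisymm hcard1 hcard2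
  have hbV' : ∀ t ∈ SV, Qm p V t ≤ 1 / (SV.card : ℝ) := by
    intro t ht
    have := hbV t ht
    rwa [hcards] at this
  have hunif : ∀ t ∈ SV, Qm p V t = 1 / (SV.card : ℝ) := by
    by_contra hc
    push_neg at hc
    obtain ⟨t, ht, htne⟩ := hc
    have hlt : Qm p V t < 1 / (SV.card : ℝ) := lt_of_le_of_ne (hbV' t ht) htne
    have : ∑ t ∈ SV, Qm p V t < ∑ _t ∈ SV, 1 / (SV.card : ℝ) :=
      Finset.sum_lt_sum hbV' ⟨t, ht, hlt⟩
    rw [hsum1, Finset.sum_const, nsmul_eq_mul, mul_one_div, div_self (ne_of_gt hSVpos)] at this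
    linarith
  refine ⟨SV.card, Finset.card_pos.2 hSVne, ?_⟩
  have hHV : Hent p V = ∑ t ∈ Finset.univ.image V, Real.negMulLog (Qm p V t) := rfl
  have hsub : SV ⊆ Finset.univ.image V := by
    intro t ht
    obtain ⟨ω, _, rfl⟩ := Finset.mem_image.1 ht
    exact Finset.mem_image_of_mem _ (Finset.mem_univ ω)
  have hzero : ∀ t ∈ Finset.univ.image V, t ∉ SV → Real.negMulLog (Qm p V t) = 0 := by
    intro t _ htS
    have : Qm p V t = 0 := by
      by_contra hne
      have hpos : 0 < Qm p V t := lt_of_le_of_ne (Qm_nonneg hp V t) (Ne.symm hne)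
      obtain ⟨ω, hω, rfl⟩ := exists_pos_of_Qm_pos hp hpos
      exact htS (Finset.mem_image_of_mem _ (hmem_supp ω hω))
    rw [this, Real.negMulLog_zero]
  rw [hHV, ← Finset.sum_subset hsub hzero]
  rw [Finset.sum_congr rfl (fun t ht => by rw [hunif t ht])]
  rw [Finset.sum_const, nsmul_eq_mul]
  rw [Real.negMulLog, one_div, Real.log_inv]
  field_simp

end Prob


section Matroid
variable {n : ℕ} (M : MatroidRk n)

lemma r_empty : M.r ∅ = 0 := Nat.le_zero.1 (by simpa using M.le_card ∅)

lemma r_single_le (e : Fin n) : M.r {e} ≤ 1 := by simpa using M.le_card {e}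

lemma r_insert_le (e : Fin n) (A : Finset (Fin n)) : M.r (insert e A) ≤ M.r A + 1 := by
  have h := M.submod A {e}
  have h2 : A ∪ {e} = insert e A := by ext x; simp [or_comm]
  rw [h2] at h
  have h3 := r_single_le M e
  omega

lemma indep_subset {A B : Finset (Fin n)} (h : B ⊆ A) (hA : M.r A = A.card) :
    M.r B = B.card := by
  classical
  have key : ∀ (S : Finset (Fin n)) (B : Finset (Fin n)), M.r (B ∪ S) ≤ M.r B + S.card := by
    intro S
    induction S using Finset.induction_on with
    | empty => intro B; simp
    | @insert a S ha ih =>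
      intro B
      have h1 : B ∪ insert a S = insert a (B ∪ S) := by
        ext x; simp only [Finset.mem_union, Finset.mem_insert]; tauto
      have h2 := r_insert_le M a (B ∪ S)
      have h3 := ih B
      have h4 : (insert a S).card = S.card + 1 := Finset.card_insert_of_notMem ha
      rw [h1, h4]
      omega
  have h1 : B ∪ (A \ B) = A := Finset.union_sdiff_of_subset h
  have h2 : M.r A ≤ M.r B + (A \ B).card := by
    have := key (A \ B) B
    rwa [h1] at this
  have h3 : (A \ B).card = A.card - B.card := Finset.card_sdiff_of_subset h
  have h4 : B.card ≤ A.card := Finset.card_le_card h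
  have h5 := M.le_card B
  omega

lemma absorb0 {e : Fin n} (he : M.r {e} = 0) (A : Finset (Fin n)) :
    M.r (insert e A) = M.r A := by
  have h := M.submod A {e}
  have h2 : A ∪ {e} = insert e A := by ext x; simp [or_comm]
  rw [h2] at h
  have h3 := M.mono (Finset.subset_insert e A)
  omega

lemma absorb1 {e f : Fin n} {A : Finset (Fin n)} (hf : f ∈ A) (hf1 : M.r {f} = 1)
    (hef : M.r {f, e} ≤ 1) : M.r (insert e A) = M.r A := by
  have h := M.submod A {f, e}
  have h2 : A ∪ {f, e} = insert e A := by
    ext x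
    simp only [Finset.mem_union, Finset.mem_insert, Finset.mem_singleton]
    constructor
    · rintro (hx | hx | hx)
      · exact Or.inr hx
      · exact Or.inr (hx ▸ hf)
      · exact Or.inl hx
    · rintro (hx | hx)
      · exact Or.inr (Or.inr hx)
      · exact Or.inl hx
  have h3 : 1 ≤ M.r (A ∩ {f, e}) := by
    have : {f} ⊆ A ∩ {f, e} := by
      intro x hx
      simp only [Finset.mem_singleton] at hx
      subst hx
      simp [hf]
    calc 1 = M.r {f} := hf1.symm
      _ ≤ _ := M.mono this
  rw [h2] at h
  have h4 := M.mono (Finset.subset_insert e A)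
  omega

lemma span_absorb (T : Finset (Fin n)) :
    ∀ (B : Finset (Fin n)),
      (∀ e ∈ B, M.r {e} = 0 ∨ ∃ f ∈ T, M.r {f} = 1 ∧ M.r {f, e} ≤ 1) →
      M.r (T ∪ B) = M.r T := by
  intro B
  induction B using Finset.induction_on with
  | empty => simp
  | @insert a B ha ih =>
    intro hB
    have h1 : T ∪ insert a B = insert a (T ∪ B) := by
      ext x; simp only [Finset.mem_union, Finset.mem_insert]; tauto
    rw [h1]
    have h2 : M.r (T ∪ B) = M.r T := ih (fun e he => hB e (Finset.mem_insert_of_mem he))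
    rcases hB a (Finset.mem_insert_self a B) with h | ⟨f, hfT, hf1, hfa⟩
    · rw [absorb0 M h, h2]
    · rw [absorb1 M (Finset.mem_union_left B hfT) hf1 hfa, h2]

lemma exists_circuit : ∀ (A : Finset (Fin n)), M.r A < A.card →
    ∃ C ⊆ A, M.r C < C.card ∧ ∀ D ⊂ C, M.r D = D.card := by
  classical
  intro A
  induction A using Finset.strongInduction with
  | _ A ih =>
    intro hA
    by_cases hmin : ∀ D ⊂ A, M.r D = D.card
    · exact ⟨A, Finset.Subset.refl A, hA, hmin⟩
    · push_neg at hmin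
      obtain ⟨D, hDA, hD⟩ := hmin
      have hD' : M.r D < D.card := lt_of_le_of_ne (M.le_card D) hD
      obtain ⟨C, hCD, h1, h2⟩ := ih D hDA hD'
      exact ⟨C, hCD.trans hDA.subset, h1, h2⟩

lemma par_trans {e f g : Fin n} (he : M.r {e} = 1) (hef : M.r {e, f} ≤ 1)
    (heg : M.r {e, g} ≤ 1) : M.r {f, g} ≤ 1 := by
  have h := M.submod {f, e} {e, g}
  have h1 : M.r {f, e} ≤ 1 := by rwa [Finset.pair_comm f e]
  have h2 : 1 ≤ M.r ({f, e} ∩ {e, g}) := by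
    have : ({e} : Finset (Fin n)) ⊆ {f, e} ∩ {e, g} := by
      intro x hx
      simp only [Finset.mem_singleton] at hx
      subst hx
      simp
    calc 1 = M.r {e} := he.symm
      _ ≤ _ := M.mono this
  have h3 : M.r {f, g} ≤ M.r ({f, e} ∪ {e, g}) := by
    apply M.mono
    intro x hx
    simp only [Finset.mem_insert, Finset.mem_singleton] at hx
    rcases hx with hx | hx <;> simp [hx]
  omega

lemma exists_transversal {α β : Type*} [DecidableEq α] [DecidableEq β] (f : α → β) :
    ∀ (s : Finset α), ∃ t ⊆ s, t.image f = s.image f ∧ t.card = (s.image f).card := by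
  intro s
  induction s using Finset.induction_on with
  | empty => exact ⟨∅, by simp⟩
  | @insert a s ha ih =>
    obtain ⟨t, hts, himg, hcard⟩ := ih
    by_cases hfa : f a ∈ s.image f
    · refine ⟨t, hts.trans (Finset.subset_insert a s), ?_, ?_⟩
      · rw [Finset.image_insert, himg, Finset.insert_eq_self.2 hfa]
      · rw [Finset.image_insert, Finset.insert_eq_self.2 hfa, hcard]
    · have hat : a ∉ t := fun h => hfa (himg ▸ Finset.mem_image_of_mem f h)
      have hfat : f a ∉ t.image f := by rw [himg]; exact hfa
      refine ⟨insert a t, Finset.insert_subset_insert a hts, ?_, ?_⟩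
      · rw [Finset.image_insert, Finset.image_insert, himg]
      · rw [Finset.card_insert_of_notMem hat, Finset.image_insert,
          Finset.card_insert_of_notMem hfa, hcard]

/-- The indicator of meeting a fixed set is a polymatroid. -/
lemma indicator_mem (P : Finset (Fin n)) :
    (fun A : Finset (Fin n) => if (A ∩ P).Nonempty then (1 : ℝ) else 0) ∈
      PolymatroidRegion n := by
  refine ⟨?_, ?_, ?_, ?_⟩
  · simp
  · intro A
    dsimp only
    split_ifs <;> norm_num
  · intro A B hAB
    have hmono : (A ∩ P).Nonempty → (B ∩ P).Nonempty := by
      rintro ⟨y, hy⟩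
      rw [Finset.mem_inter] at hy
      exact ⟨y, Finset.mem_inter.2 ⟨hAB hy.1, hy.2⟩⟩
    dsimp only
    split_ifs <;> norm_num <;> tauto
  · intro A B
    have Hui : ((A ∩ B) ∩ P).Nonempty → (A ∩ P).Nonempty ∧ (B ∩ P).Nonempty := by
      rintro ⟨y, hy⟩
      simp only [Finset.mem_inter] at hy
      exact ⟨⟨y, Finset.mem_inter.2 ⟨hy.1.1, hy.2⟩⟩, ⟨y, Finset.mem_inter.2 ⟨hy.1.2, hy.2⟩⟩⟩
    have Huu : ((A ∪ B) ∩ P).Nonempty → (A ∩ P).Nonempty ∨ (B ∩ P).Nonempty := by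
      rintro ⟨y, hy⟩
      simp only [Finset.mem_inter, Finset.mem_union] at hy
      rcases hy.1 with h | h
      · exact Or.inl ⟨y, Finset.mem_inter.2 ⟨h, hy.2⟩⟩
      · exact Or.inr ⟨y, Finset.mem_inter.2 ⟨h, hy.2⟩⟩
    dsimp only
    split_ifs <;> norm_num <;> tauto

/-- From extremality and rank at least 2, obtain the key configuration. -/
lemma exists_config (hn : 0 < n) (hrk : 2 ≤ M.r Finset.univ)
    (hext : SpansExtremeRay M.rr) :
    ∃ (i j : Fin n) (A : Finset (Fin n)), (i : ℕ) ≠ 0 ∧ (j : ℕ) ≠ 0 ∧ i ≠ j ∧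
      i ∉ A ∧ j ∉ A ∧
      M.r {i} = 1 ∧ M.r {j} = 1 ∧ M.r {i, j} = 2 ∧
      M.r (insert i A) = M.r A + 1 ∧ M.r (insert j A) = M.r A + 1 ∧
      M.r (insert j (insert i A)) = M.r A + 1 := by
  classical
  by_cases hbig : ∃ C : Finset (Fin n),
      M.r C < C.card ∧ (∀ D ⊂ C, M.r D = D.card) ∧ 3 ≤ C.card
  · obtain ⟨C, hdep, hmin, hcard3⟩ := hbig
    set z : Fin n := ⟨0, hn⟩ with hz
    have hcz : 1 < (C.erase z).card := by
      by_cases hzC : z ∈ C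
      · have := Finset.card_erase_add_one hzC
        omega
      · rw [Finset.erase_eq_of_notMem hzC]
        omega
    obtain ⟨i, hi, j, hj, hij⟩ := Finset.one_lt_card.1 hcz
    have hiC : i ∈ C := Finset.mem_of_mem_erase hi
    have hjC : j ∈ C := Finset.mem_of_mem_erase hj
    have hiz : (i : ℕ) ≠ 0 := by
      intro h
      exact Finset.ne_of_mem_erase hi (Fin.ext h)
    have hjz : (j : ℕ) ≠ 0 := by
      intro h
      exact Finset.ne_of_mem_erase hj (Fin.ext h)
    set A := (C.erase i).erase j with hA
    have hjCi : j ∈ C.erase i := Finset.mem_erase.2 ⟨fun h => hij h.symm, hjC⟩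
    have hiCj : i ∈ C.erase j := Finset.mem_erase.2 ⟨hij, hiC⟩
    have hiA : i ∉ A := fun h =>
      (Finset.mem_erase.1 (Finset.mem_of_mem_erase h)).1 rfl
    have hjA : j ∉ A := fun h => (Finset.mem_erase.1 h).1 rfl
    have hins_i : insert i A = C.erase j := by
      rw [hA, Finset.erase_right_comm]
      exact Finset.insert_erase (Finset.mem_erase.2 ⟨hij, hiC⟩)
    have hins_j : insert j A = C.erase i := Finset.insert_erase hjCi
    have hins_ij : insert j (insert i A) = C := by
      rw [hins_i]
      exact Finset.insert_erase hjC
    -- cardinalities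
    have hm1 : A.card + 1 = (C.erase i).card := Finset.card_erase_add_one hjCi
    have hm2 : (C.erase i).card + 1 = C.card := Finset.card_erase_add_one hiC
    have hm3 : (C.erase j).card + 1 = C.card := Finset.card_erase_add_one hjC
    -- proper subsets of C are independent
    have hAC : A ⊂ C :=
      lt_of_le_of_lt (Finset.erase_subset j (C.erase i)) (Finset.erase_ssubset hiC)
    have hrA : M.r A = A.card := hmin A hAC
    have hrCi : M.r (C.erase i) = (C.erase i).card := hmin _ (Finset.erase_ssubset hiC)
    have hrCj : M.r (C.erase j) = (C.erase j).card := hmin _ (Finset.erase_ssubset hjC)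
    have hri : M.r {i} = 1 := by
      have hsub : ({i} : Finset (Fin n)) ⊂ C := by
        rw [Finset.ssubset_iff_subset_ne]
        refine ⟨Finset.singleton_subset_iff.2 hiC, fun h => ?_⟩
        rw [← h] at hcard3
        simp at hcard3
      have := hmin _ hsub
      simpa using this
    have hrj : M.r {j} = 1 := by
      have hsub : ({j} : Finset (Fin n)) ⊂ C := by
        rw [Finset.ssubset_iff_subset_ne]
        refine ⟨Finset.singleton_subset_iff.2 hjC, fun h => ?_⟩
        rw [← h] at hcard3
        simp at hcard3
      have := hmin _ hsub
      simpa using this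
    have hrij : M.r {i, j} = 2 := by
      have hcardij : ({i, j} : Finset (Fin n)).card = 2 := Finset.card_pair hij
      have hsub : ({i, j} : Finset (Fin n)) ⊂ C := by
        rw [Finset.ssubset_iff_subset_ne]
        refine ⟨Finset.insert_subset hiC (Finset.singleton_subset_iff.2 hjC), fun h => ?_⟩
        rw [← h, hcardij] at hcard3
        omega
      have := hmin _ hsub
      rw [this, hcardij]
    have hrC : M.r C = A.card + 1 := by
      have h1 : M.r (C.erase j) ≤ M.r C := M.mono (Finset.erase_subset j C)
      have h2 : M.r C < C.card := hdep
      omega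
    refine ⟨i, j, A, hiz, hjz, hij, hiA, hjA, hri, hrj, hrij, ?_, ?_, ?_⟩
    · rw [hins_i, hrCj, hrA]; omega
    · rw [hins_j, hrCi, hrA]; omega
    · rw [hins_ij, hrC, hrA]
  · exfalso
    -- all circuits have size at most 2
    have star : ∀ T : Finset (Fin n), (∀ e ∈ T, M.r {e} = 1) →
        (∀ e ∈ T, ∀ f ∈ T, e ≠ f → ¬ M.r {e, f} ≤ 1) → M.r T = T.card := by
      intro T h1 h2
      by_contra hne
      have hlt : M.r T < T.card := lt_of_le_of_ne (M.le_card T) hne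
      obtain ⟨C, hCT, hdep, hmin⟩ := exists_circuit M T hlt
      have hc3 : ¬ 3 ≤ C.card := fun h => hbig ⟨C, hdep, hmin, h⟩
      have hc2 : C.card ≤ 2 := by omega
      by_cases hc0 : C.card = 0
      · rw [Finset.card_eq_zero.1 hc0] at hdep
        rw [r_empty] at hdep
        simp at hdep
      by_cases hc1 : C.card = 1
      · obtain ⟨e, rfl⟩ := Finset.card_eq_one.1 hc1
        have := h1 e (hCT (Finset.mem_singleton_self e))
        rw [this] at hdep
        simp at hdep
      have hc2' : C.card = 2 := by omega
      obtain ⟨e, f, hef, rfl⟩ := Finset.card_eq_two.1 hc2'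
      have he : e ∈ T := hCT (by simp)
      have hf : f ∈ T := hCT (by simp)
      have := h2 e he f hf hef
      rw [hc2'] at hdep
      omega
    -- there is an element of rank one
    have hL : ∃ e₀, M.r {e₀} = 1 := by
      by_contra hc
      push_neg at hc
      have habs : ∀ e ∈ (Finset.univ : Finset (Fin n)), M.r {e} = 0 ∨
          ∃ f ∈ (∅ : Finset (Fin n)), M.r {f} = 1 ∧ M.r {f, e} ≤ 1 := by
        intro e _
        left
        have h1 := r_single_le M e
        have h2 := hc e
        omega
      have := span_absorb M ∅ Finset.univ habs
      rw [Finset.empty_union, r_empty] at this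
      omega
    obtain ⟨e₀, he₀⟩ := hL
    -- parallel classes
    set cls : Fin n → Finset (Fin n) :=
      fun e => Finset.univ.filter (fun f => M.r {f} = 1 ∧ M.r {e, f} ≤ 1) with hcls
    have cls_self : ∀ e, M.r {e} = 1 → e ∈ cls e := by
      intro e he
      simp only [hcls, Finset.mem_filter, Finset.mem_univ, true_and]
      refine ⟨he, ?_⟩
      have : ({e, e} : Finset (Fin n)) = {e} := Finset.insert_eq_self.2 (Finset.mem_singleton_self e)
      rw [this, he]
    have cls_eq : ∀ e f, M.r {e} = 1 → M.r {f} = 1 → M.r {e, f} ≤ 1 → cls e = cls f := by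
      intro e f he hf hef
      ext g
      simp only [hcls, Finset.mem_filter, Finset.mem_univ, true_and, and_congr_right_iff]
      intro _
      constructor
      · intro heg
        exact par_trans M he hef heg
      · intro hfg
        have hfe : M.r {f, e} ≤ 1 := by rwa [Finset.pair_comm f e]
        exact par_trans M hf hfe hfg
    -- the rank formula
    have RF : ∀ A : Finset (Fin n),
        M.r A = ((A.filter (fun e => M.r {e} = 1)).image cls).card := by
      intro A
      set AL := A.filter (fun e => M.r {e} = 1) with hAL
      obtain ⟨T, hTAL, himg, hcardT⟩ := exists_transversal cls AL
      have hinj : Set.InjOn cls T := Finset.injOn_of_card_image_eq (by rw [himg, hcardT])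
      have hT1 : ∀ e ∈ T, M.r {e} = 1 := fun e he => (Finset.mem_filter.1 (hTAL he)).2
      have hT2 : ∀ e ∈ T, ∀ f ∈ T, e ≠ f → ¬ M.r {e, f} ≤ 1 := by
        intro e he f hf hef hle
        exact hef (hinj he hf (cls_eq e f (hT1 e he) (hT1 f hf) hle))
      have hrT : M.r T = T.card := star T hT1 hT2
      have hub : M.r A ≤ M.r T := by
        have habs : ∀ e ∈ A, M.r {e} = 0 ∨ ∃ f ∈ T, M.r {f} = 1 ∧ M.r {f, e} ≤ 1 := by
          intro e heA
          by_cases he1 : M.r {e} = 1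
          · right
            have heAL : e ∈ AL := Finset.mem_filter.2 ⟨heA, he1⟩
            have hmem : cls e ∈ T.image cls := himg ▸ Finset.mem_image_of_mem cls heAL
            obtain ⟨f, hfT, hfe⟩ := Finset.mem_image.1 hmem
            have heine : e ∈ cls f := by
              rw [hfe]
              exact cls_self e he1
            simp only [hcls, Finset.mem_filter, Finset.mem_univ, true_and] at heine
            exact ⟨f, hfT, hT1 f hfT, heine.2⟩
          · left
            have h1 := r_single_le M e
            omega
        have hspan := span_absorb M T A habs
        calc M.r A ≤ M.r (T ∪ A) := M.mono Finset.subset_union_right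
          _ = M.r T := hspan
      have hlb : M.r T ≤ M.r A := M.mono (hTAL.trans (Finset.filter_subset _ _))
      have : M.r A = T.card := by omega
      rw [this, hcardT]
    -- decomposition
    set S₀ := cls e₀ with hS₀
    set g : Finset (Fin n) → Finset (Finset (Fin n)) :=
      fun A => (A.filter (fun e => M.r {e} = 1)).image cls with hg
    have hmemS₀ : ∀ A, S₀ ∈ g A ↔ (A ∩ S₀).Nonempty := by
      intro A
      constructor
      · intro hx
        obtain ⟨e, he, hee⟩ := Finset.mem_image.1 hx
        have h1 : M.r {e} = 1 := (Finset.mem_filter.1 he).2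
        have h2 : e ∈ cls e := cls_self e h1
        rw [hee] at h2
        exact ⟨e, Finset.mem_inter.2 ⟨(Finset.mem_filter.1 he).1, h2⟩⟩
      · rintro ⟨x, hx⟩
        rw [Finset.mem_inter] at hx
        have hx2 := hx.2
        simp only [hS₀, hcls, Finset.mem_filter, Finset.mem_univ, true_and] at hx2
        have hclsx : cls x = S₀ := (cls_eq e₀ x he₀ hx2.1 hx2.2).symm
        rw [← hclsx]
        exact Finset.mem_image_of_mem cls (Finset.mem_filter.2 ⟨hx.1, hx2.1⟩)
    have hsplit : ∀ A : Finset (Fin n), (M.r A : ℝ) =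
        (if (A ∩ S₀).Nonempty then (1 : ℝ) else 0) + (((g A) \ {S₀}).card : ℝ) := by
      intro A
      rw [RF A]
      by_cases hmem : (A ∩ S₀).Nonempty
      · rw [if_pos hmem]
        have hSmem : S₀ ∈ g A := (hmemS₀ A).2 hmem
        have hgA : g A = insert S₀ ((g A) \ {S₀}) := by
          rw [Finset.sdiff_singleton_eq_erase, Finset.insert_erase hSmem]
        rw [Finset.sdiff_singleton_eq_erase]
        have hcnt : (g A).card = ((g A).erase S₀).card + 1 :=
          (Finset.card_erase_add_one hSmem).symm
        rw [hcnt]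
        push_cast
        ring
      · rw [if_neg hmem]
        have hSnot : S₀ ∉ g A := fun h => hmem ((hmemS₀ A).1 h)
        rw [Finset.sdiff_singleton_eq_erase, Finset.erase_eq_of_notMem hSnot]
        simp [hg]
    -- h₂ is a polymatroid
    set h₂ : Finset (Fin n) → ℝ := fun A => (((g A) \ {S₀}).card : ℝ) with hh₂
    have hg_mono : ∀ {A B : Finset (Fin n)}, A ⊆ B → g A ⊆ g B := by
      intro A B hAB
      exact Finset.image_subset_image (Finset.filter_subset_filter _ hAB)
    have hg_union : ∀ A B : Finset (Fin n), g (A ∪ B) = g A ∪ g B := by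
      intro A B
      simp only [hg]
      rw [Finset.filter_union, Finset.image_union]
    have hg_inter : ∀ A B : Finset (Fin n), g (A ∩ B) ⊆ g A ∩ g B :=
      fun A B => Finset.subset_inter (hg_mono Finset.inter_subset_left)
        (hg_mono Finset.inter_subset_right)
    have hΓ2 : h₂ ∈ PolymatroidRegion n := by
      refine ⟨?_, ?_, ?_, ?_⟩
      · simp [hh₂, hg]
      · intro A
        exact Nat.cast_nonneg _
      · intro A B hAB
        simp only [hh₂]
        have : (g A) \ {S₀} ⊆ (g B) \ {S₀} := Finset.sdiff_subset_sdiff (hg_mono hAB) (le_refl _)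
        exact_mod_cast Finset.card_le_card this
      · intro A B
        simp only [hh₂]
        have h1 : (g (A ∩ B)) \ {S₀} ⊆ ((g A) \ {S₀}) ∩ ((g B) \ {S₀}) := by
          intro x hx
          rw [Finset.mem_sdiff] at hx
          have := hg_inter A B hx.1
          rw [Finset.mem_inter] at this
          exact Finset.mem_inter.2 ⟨Finset.mem_sdiff.2 ⟨this.1, hx.2⟩,
            Finset.mem_sdiff.2 ⟨this.2, hx.2⟩⟩
        have h2 : (g (A ∪ B)) \ {S₀} = ((g A) \ {S₀}) ∪ ((g B) \ {S₀}) := by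
          rw [hg_union, Finset.union_sdiff_distrib]
        have h3 := Finset.card_inter_add_card_union ((g A) \ {S₀}) ((g B) \ {S₀})
        have h4 : (g (A ∩ B) \ {S₀}).card ≤ (((g A) \ {S₀}) ∩ ((g B) \ {S₀})).card :=
          Finset.card_le_card h1
        rw [h2]
        push_cast
        have h5 : ((((g A) \ {S₀}) ∪ ((g B) \ {S₀})).card : ℝ)
            = (((g A) \ {S₀}).card : ℝ) + (((g B) \ {S₀}).card : ℝ)
              - ((((g A) \ {S₀}) ∩ ((g B) \ {S₀})).card : ℝ) := by
          have h3' : ((((g A) \ {S₀}) ∩ ((g B) \ {S₀})).card : ℝ)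
              + ((((g A) \ {S₀}) ∪ ((g B) \ {S₀})).card : ℝ)
              = (((g A) \ {S₀}).card : ℝ) + (((g B) \ {S₀}).card : ℝ) := by
            exact_mod_cast h3
          linarith
        rw [h5]
        have h6 : ((g (A ∩ B) \ {S₀}).card : ℝ)
            ≤ ((((g A) \ {S₀}) ∩ ((g B) \ {S₀})).card : ℝ) := by exact_mod_cast h4
        linarith
    -- apply extremality
    have hsum : (fun A : Finset (Fin n) => if (A ∩ S₀).Nonempty then (1 : ℝ) else 0) + h₂
        = (1 : ℝ) • M.rr := by
      funext A
      show (if (A ∩ S₀).Nonempty then (1 : ℝ) else 0) + h₂ A = (1 : ℝ) • M.rr A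
      rw [hh₂, one_smul]
      show _ = M.rr A
      rw [MatroidRk.rr, hsplit A]
    obtain ⟨⟨c, _, hc⟩, _⟩ := hext.2.2 _ _ (indicator_mem S₀) hΓ2 ⟨1, zero_le_one, hsum⟩
    have he₀S₀ : ({e₀} ∩ S₀).Nonempty :=
      ⟨e₀, Finset.mem_inter.2 ⟨Finset.mem_singleton_self e₀, cls_self e₀ he₀⟩⟩
    have huS₀ : ((Finset.univ : Finset (Fin n)) ∩ S₀).Nonempty :=
      ⟨e₀, Finset.mem_inter.2 ⟨Finset.mem_univ e₀, cls_self e₀ he₀⟩⟩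
    have hc1 : (1 : ℝ) = c * (M.r {e₀} : ℝ) := by
      have := congrFun hc {e₀}
      rw [if_pos he₀S₀] at this
      exact this
    have hc2 : (1 : ℝ) = c * (M.r Finset.univ : ℝ) := by
      have := congrFun hc Finset.univ
      rw [if_pos huS₀] at this
      exact this
    rw [he₀] at hc1
    have hcval : c = 1 := by
      rw [Nat.cast_one, mul_one] at hc1
      linarith
    rw [hcval, one_mul] at hc2
    have : (2 : ℝ) ≤ (M.r Finset.univ : ℝ) := by exact_mod_cast hrk
    linarith

end Matroid


section Glue

variable {n : ℕ} {N : ℕ} (X : Fin n → Fin N → ℕ)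

/-- restriction of a tuple to a subset of coordinates -/
def restr {S T : Finset (Fin n)} (h : S ⊆ T) (u : T → ℕ) : S → ℕ :=
  fun k => u ⟨k.1, h k.2⟩

lemma restr_joint {S T : Finset (Fin n)} (h : S ⊆ T) :
    (restr h) ∘ (joint X T) = joint X S := rfl

lemma joint_eq_iff (S : Finset (Fin n)) (ω ω' : Fin N) :
    joint X S ω = joint X S ω' ↔ ∀ k, k ∈ S → X k ω = X k ω' := by
  constructor
  · intro h k hk
    exact congrFun h ⟨k, hk⟩
  · intro h
    funext k
    exact h k.1 k.2

end Glue

theorem stmt3' (n : ℕ) (M : MatroidRk n) (hrk : 2 ≤ M.r Finset.univ)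
    (hext : SpansExtremeRay M.rr) (a b : ℝ) (ha : 0 < a) (hb : 0 < b)
    (hent : IsEntropic (fun A => a * M.rr A + b * rUone n 1 A)) :
    ∃ v : ℤ, 2 ≤ v ∧ a = Real.log (v : ℝ) := by
  classical
  have hn : 0 < n := by
    by_contra h
    push_neg at h
    have h0 : n = 0 := by omega
    subst h0
    have h1 := M.le_card Finset.univ
    have h2 : (Finset.univ : Finset (Fin 0)).card = 0 := by simp
    omega
  obtain ⟨i, j, A, hiz, hjz, hij, hiA, hjA, hri, hrj, hrij, hrAi, hrAj, hrAij⟩ :=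
    exists_config M hn hrk hext
  obtain ⟨N, p, X, hp, hps, hH⟩ := hent
  have hH' : ∀ S : Finset (Fin n), Hent p (joint X S)
      = a * (M.r S : ℝ) + b * rUone n 1 S := fun S => (hH S).symm
  -- the rUone values
  have hmemα : ∀ x : Fin n, x ∈ alphaSet n 1 ↔ (x : ℕ) = 0 := by
    intro x
    simp [alphaSet, Nat.lt_one_iff]
  have hu_ins : ∀ (e : Fin n), (e : ℕ) ≠ 0 → ∀ S, rUone n 1 (insert e S) = rUone n 1 S := by
    intro e he S
    unfold rUone
    have hset : insert e S ∩ alphaSet n 1 = S ∩ alphaSet n 1 := by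
      ext x
      simp only [Finset.mem_inter, Finset.mem_insert]
      constructor
      · rintro ⟨hx | hx, hα⟩
        · exact absurd ((hmemα x).1 hα) (hx ▸ he)
        · exact ⟨hx, hα⟩
      · rintro ⟨hx, hα⟩
        exact ⟨Or.inr hx, hα⟩
    rw [hset]
  have hu_single : ∀ (e : Fin n), (e : ℕ) ≠ 0 → rUone n 1 {e} = 0 := by
    intro e he
    unfold rUone
    rw [if_neg]
    rintro ⟨x, hx⟩
    rw [Finset.mem_inter, Finset.mem_singleton] at hx
    exact he (hx.1 ▸ (hmemα x).1 hx.2)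
  have hu_ij : rUone n 1 ({i, j} : Finset (Fin n)) = 0 := by
    show rUone n 1 (insert i {j}) = 0
    rw [hu_ins i hiz, hu_single j hjz]
  -- entropy equalities
  have e_i : Hent p (joint X (insert i A)) = Hent p (joint X A) + Hent p (joint X {i}) := by
    rw [hH', hH', hH', hrAi, hu_ins i hiz A, hri, hu_single i hiz]
    push_cast
    ring
  have e_j : Hent p (joint X (insert j A)) = Hent p (joint X A) + Hent p (joint X {j}) := by
    rw [hH', hH', hH', hrAj, hu_ins j hjz A, hrj, hu_single j hjz]
    push_cast
    ring
  have e_ij : Hent p (joint X ({i, j} : Finset (Fin n)))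
      = Hent p (joint X {i}) + Hent p (joint X {j}) := by
    rw [hH', hH', hH', hrij, hu_ij, hri, hrj, hu_single i hiz, hu_single j hjz]
    push_cast
    ring
  have d_j : Hent p (joint X (insert i A)) = Hent p (joint X (insert j (insert i A))) := by
    rw [hH', hH', hrAij, hrAi, hu_ins j hjz, hu_ins i hiz]
  have hcomm : insert i (insert j A) = insert j (insert i A) := Finset.insert_comm i j A
  have d_i : Hent p (joint X (insert j A)) = Hent p (joint X (insert i (insert j A))) := by
    rw [hH', hH', hcomm, hrAij, hrAj, hu_ins j hjz, hu_ins j hjz, hu_ins i hiz]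
  -- the three variables
  set W := joint X A with hW
  set U := joint X {i} with hU
  set V := joint X {j} with hV
  have hsubA_i : A ⊆ insert i A := Finset.subset_insert i A
  have hsubi_i : ({i} : Finset (Fin n)) ⊆ insert i A :=
    Finset.singleton_subset_iff.2 (Finset.mem_insert_self i A)
  have hsubA_j : A ⊆ insert j A := Finset.subset_insert j A
  have hsubj_j : ({j} : Finset (Fin n)) ⊆ insert j A :=
    Finset.singleton_subset_iff.2 (Finset.mem_insert_self j A)
  have hsubi_ij : ({i} : Finset (Fin n)) ⊆ {i, j} :=
    Finset.singleton_subset_iff.2 (Finset.mem_insert_self i {j})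
  have hsubj_ij : ({j} : Finset (Fin n)) ⊆ {i, j} :=
    Finset.singleton_subset_iff.2 (Finset.mem_insert_of_mem (Finset.mem_singleton_self j))
  -- independence of (W, U)
  have hWU1 : ∀ ω, 0 < p ω → Qm p (joint X (insert i A)) (joint X (insert i A) ω)
      = Qm p W (W ω) * Qm p U (U ω) := by
    have hinj : ∀ u v : ({ x // x ∈ insert i A } → ℕ),
        restr hsubA_i u = restr hsubA_i v → restr hsubi_i u = restr hsubi_i v → u = v := by
      intro u v h1 h2
      funext k
      rcases Finset.mem_insert.1 k.2 with hk | hk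
      · have hki : k = ⟨i, Finset.mem_insert_self i A⟩ := Subtype.ext hk
        rw [hki]
        exact congrFun h2 ⟨i, Finset.mem_singleton_self i⟩
      · exact congrFun h1 ⟨k.1, hk⟩
    have := indep_of_Hent_add hp hps hinj
      (by rw [restr_joint X hsubA_i, restr_joint X hsubi_i]; exact e_i)
    intro ω hω
    have h2 := this ω hω
    rw [restr_joint X hsubA_i, restr_joint X hsubi_i] at h2
    exact h2
  have hWU : ∀ ω, 0 < p ω →
      Qm p (fun ω' => (W ω', U ω')) (W ω, U ω) = Qm p W (W ω) * Qm p U (U ω) := by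
    intro ω hω
    rw [← hWU1 ω hω]
    apply Qm_congr
    intro ω'
    rw [Prod.mk.injEq]
    constructor
    · rintro ⟨h1, h2⟩
      rw [joint_eq_iff]
      intro k hk
      rcases Finset.mem_insert.1 hk with hk' | hk'
      · subst hk'
        exact (joint_eq_iff X {k} ω' ω).1 h2 k (Finset.mem_singleton_self k)
      · exact (joint_eq_iff X A ω' ω).1 h1 k hk'
    · intro h
      have hall := (joint_eq_iff X (insert i A) ω' ω).1 h
      constructor
      · rw [joint_eq_iff]
        intro k hk
        exact hall k (Finset.mem_insert_of_mem hk)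
      · rw [joint_eq_iff]
        intro k hk
        rw [Finset.mem_singleton] at hk
        subst hk
        exact hall k (Finset.mem_insert_self k A)
  -- independence of (W, V)
  have hWV1 : ∀ ω, 0 < p ω → Qm p (joint X (insert j A)) (joint X (insert j A) ω)
      = Qm p W (W ω) * Qm p V (V ω) := by
    have hinj : ∀ u v : ({ x // x ∈ insert j A } → ℕ),
        restr hsubA_j u = restr hsubA_j v → restr hsubj_j u = restr hsubj_j v → u = v := by
      intro u v h1 h2
      funext k
      rcases Finset.mem_insert.1 k.2 with hk | hk
      · have hki : k = ⟨j, Finset.mem_insert_self j A⟩ := Subtype.ext hk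
        rw [hki]
        exact congrFun h2 ⟨j, Finset.mem_singleton_self j⟩
      · exact congrFun h1 ⟨k.1, hk⟩
    have := indep_of_Hent_add hp hps hinj
      (by rw [restr_joint X hsubA_j, restr_joint X hsubj_j]; exact e_j)
    intro ω hω
    have h2 := this ω hω
    rw [restr_joint X hsubA_j, restr_joint X hsubj_j] at h2
    exact h2
  have hWV : ∀ ω, 0 < p ω →
      Qm p (fun ω' => (W ω', V ω')) (W ω, V ω) = Qm p W (W ω) * Qm p V (V ω) := by
    intro ω hω
    rw [← hWV1 ω hω]
    apply Qm_congr
    intro ω'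
    rw [Prod.mk.injEq]
    constructor
    · rintro ⟨h1, h2⟩
      rw [joint_eq_iff]
      intro k hk
      rcases Finset.mem_insert.1 hk with hk' | hk'
      · subst hk'
        exact (joint_eq_iff X {k} ω' ω).1 h2 k (Finset.mem_singleton_self k)
      · exact (joint_eq_iff X A ω' ω).1 h1 k hk'
    · intro h
      have hall := (joint_eq_iff X (insert j A) ω' ω).1 h
      constructor
      · rw [joint_eq_iff]
        intro k hk
        exact hall k (Finset.mem_insert_of_mem hk)
      · rw [joint_eq_iff]
        intro k hk
        rw [Finset.mem_singleton] at hk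
        subst hk
        exact hall k (Finset.mem_insert_self k A)
  -- independence of (U, V)
  have hUV1 : ∀ ω, 0 < p ω →
      Qm p (joint X ({i, j} : Finset (Fin n))) (joint X ({i, j} : Finset (Fin n)) ω)
      = Qm p U (U ω) * Qm p V (V ω) := by
    have hinj : ∀ u v : ({ x // x ∈ ({i, j} : Finset (Fin n)) } → ℕ),
        restr hsubi_ij u = restr hsubi_ij v → restr hsubj_ij u = restr hsubj_ij v → u = v := by
      intro u v h1 h2
      funext k
      rcases Finset.mem_insert.1 k.2 with hk | hk
      · have hki : k = ⟨i, Finset.mem_insert_self i {j}⟩ := Subtype.ext hk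
        rw [hki]
        exact congrFun h1 ⟨i, Finset.mem_singleton_self i⟩
      · rw [Finset.mem_singleton] at hk
        have hki : k = ⟨j, Finset.mem_insert_of_mem (Finset.mem_singleton_self j)⟩ :=
          Subtype.ext hk
        rw [hki]
        exact congrFun h2 ⟨j, Finset.mem_singleton_self j⟩
    have := indep_of_Hent_add hp hps hinj
      (by rw [restr_joint X hsubi_ij, restr_joint X hsubj_ij]; exact e_ij)
    intro ω hω
    have h2 := this ω hω
    rw [restr_joint X hsubi_ij, restr_joint X hsubj_ij] at h2
    exact h2
  have hUV : ∀ ω, 0 < p ω →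
      Qm p (fun ω' => (U ω', V ω')) (U ω, V ω) = Qm p U (U ω) * Qm p V (V ω) := by
    intro ω hω
    rw [← hUV1 ω hω]
    apply Qm_congr
    intro ω'
    rw [Prod.mk.injEq]
    constructor
    · rintro ⟨h1, h2⟩
      rw [joint_eq_iff]
      intro k hk
      rcases Finset.mem_insert.1 hk with hk' | hk'
      · subst hk'
        exact (joint_eq_iff X {k} ω' ω).1 h1 k (Finset.mem_singleton_self k)
      · rw [Finset.mem_singleton] at hk'
        subst hk'
        exact (joint_eq_iff X {k} ω' ω).1 h2 k (Finset.mem_singleton_self k)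
    · intro h
      have hall := (joint_eq_iff X ({i, j} : Finset (Fin n)) ω' ω).1 h
      constructor
      · rw [joint_eq_iff]
        intro k hk
        rw [Finset.mem_singleton] at hk
        subst hk
        exact hall k (Finset.mem_insert_self k {j})
      · rw [joint_eq_iff]
        intro k hk
        rw [Finset.mem_singleton] at hk
        subst hk
        exact hall k (Finset.mem_insert_of_mem (Finset.mem_singleton_self k))
  -- determination of V from (W, U)
  have hsub_iA_jiA : insert i A ⊆ insert j (insert i A) := Finset.subset_insert j (insert i A)
  have hdetV : ∀ ω ω', 0 < p ω → 0 < p ω' → W ω = W ω' → U ω = U ω' → V ω = V ω' := by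
    have hdet := det_of_Hent_eq hp (Y := joint X (insert j (insert i A)))
      (f := restr hsub_iA_jiA)
      (by rw [restr_joint X hsub_iA_jiA]; exact d_j)
    intro ω ω' hω hω' hWe hUe
    have hfeq : joint X (insert i A) ω = joint X (insert i A) ω' := by
      rw [joint_eq_iff]
      intro k hk
      rcases Finset.mem_insert.1 hk with hk' | hk'
      · subst hk'
        exact (joint_eq_iff X {k} ω ω').1 hUe k (Finset.mem_singleton_self k)
      · exact (joint_eq_iff X A ω ω').1 hWe k hk'
    have hYeq := hdet ω ω' hω hω' (by
      have : restr hsub_iA_jiA ∘ joint X (insert j (insert i A)) = joint X (insert i A) :=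
        restr_joint X hsub_iA_jiA
      calc restr hsub_iA_jiA (joint X (insert j (insert i A)) ω)
          = joint X (insert i A) ω := congrFun this ω
        _ = joint X (insert i A) ω' := hfeq
        _ = restr hsub_iA_jiA (joint X (insert j (insert i A)) ω') := (congrFun this ω').symm)
    rw [joint_eq_iff]
    intro k hk
    rw [Finset.mem_singleton] at hk
    subst hk
    exact (joint_eq_iff X (insert k (insert i A)) ω ω').1 hYeq k
      (Finset.mem_insert_self k (insert i A))
  -- determination of U from (W, V)
  have hsub_jA_ijA : insert j A ⊆ insert i (insert j A) := Finset.subset_insert i (insert j A)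
  have hdetU : ∀ ω ω', 0 < p ω → 0 < p ω' → W ω = W ω' → V ω = V ω' → U ω = U ω' := by
    have hdet := det_of_Hent_eq hp (Y := joint X (insert i (insert j A)))
      (f := restr hsub_jA_ijA)
      (by rw [restr_joint X hsub_jA_ijA]; exact d_i)
    intro ω ω' hω hω' hWe hVe
    have hfeq : joint X (insert j A) ω = joint X (insert j A) ω' := by
      rw [joint_eq_iff]
      intro k hk
      rcases Finset.mem_insert.1 hk with hk' | hk'
      · subst hk'
        exact (joint_eq_iff X {k} ω ω').1 hVe k (Finset.mem_singleton_self k)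
      · exact (joint_eq_iff X A ω ω').1 hWe k hk'
    have hYeq := hdet ω ω' hω hω' (by
      have : restr hsub_jA_ijA ∘ joint X (insert i (insert j A)) = joint X (insert j A) :=
        restr_joint X hsub_jA_ijA
      calc restr hsub_jA_ijA (joint X (insert i (insert j A)) ω)
          = joint X (insert j A) ω := congrFun this ω
        _ = joint X (insert j A) ω' := hfeq
        _ = restr hsub_jA_ijA (joint X (insert i (insert j A)) ω') := (congrFun this ω').symm)
    rw [joint_eq_iff]
    intro k hk
    rw [Finset.mem_singleton] at hk
    subst hk
    exact (joint_eq_iff X (insert k (insert j A)) ω ω').1 hYeq k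
      (Finset.mem_insert_self k (insert j A))
  -- the main lemma
  obtain ⟨v, hv1, hvH⟩ := Hent_eq_log hp hps hUV hWU hWV hdetV hdetU
  have haV : a = Hent p V := by
    rw [hV, hH', hrj, hu_single j hjz]
    push_cast
    ring
  have hav : a = Real.log v := by rw [haV, hvH]
  have hv2 : 2 ≤ v := by
    by_contra hlt
    have hv1' : v = 1 := by omega
    rw [hv1', Nat.cast_one, Real.log_one] at hav
    linarith
  refine ⟨(v : ℤ), by exact_mod_cast hv2, ?_⟩
  rw [hav]
  norm_num

/-- for a matroid `M` of rank `≥ 2` spanning an extreme ray of `Γ_n`,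
if `a·r_M + b·r_{U_{1,1}^n}` is entropic with `a, b > 0`, then `a = log v`
for some integer `v ≥ 2`. -/
theorem stmt3 (n : ℕ) (M : MatroidRk n) (hrk : 2 ≤ M.r Finset.univ)
    (hext : SpansExtremeRay M.rr) (a b : ℝ) (ha : 0 < a) (hb : 0 < b)
    (hent : IsEntropic (fun A => a * M.rr A + b * rUone n 1 A)) :
    ∃ v : ℤ, 2 ≤ v ∧ a = Real.log (v : ℝ) := by
  exact stmt3' n M hrk hext a b ha hb hent
end

section
/- Let M₁ and M₂ be matroids on the ground set N_n such that every circuit of M₁ is also a circuit of M₂. Then for every C ⊆ N_n and every S ⊆ N_n \ C, r_{M₁}(C∪S) − r_{M₁}(C) ≥ r_{M₂}(C∪S) − r_{M₂}(C). -/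
open Finset

namespace MatroidRk

variable {n : ℕ} (M : MatroidRk n)

lemma r_empty : M.r ∅ = 0 := Nat.le_zero.mp (by simpa using M.le_card ∅)

lemma r_insert_le (e : Fin n) (A : Finset (Fin n)) :
    M.r (insert e A) ≤ M.r A + 1 := by
  have h := M.submod {e} A
  have h1 : M.r {e} ≤ 1 := by simpa using M.le_card {e}
  have h2 : M.r ({e} ∪ A) = M.r (insert e A) := by rw [Finset.insert_eq]
  omega

lemma le_r_insert (e : Fin n) (A : Finset (Fin n)) :
    M.r A ≤ M.r (insert e A) := M.mono (Finset.subset_insert _ _)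

lemma indep_subset {A B : Finset (Fin n)} (hAB : A ⊆ B) (hB : M.Indep B) :
    M.Indep A := by
  have h := M.submod A (B \ A)
  have h0 : A ∩ (B \ A) = ∅ := by simp
  have h1 : A ∪ (B \ A) = B := Finset.union_sdiff_of_subset hAB
  have h2 : M.r (B \ A) ≤ (B \ A).card := M.le_card _
  have h3 : (B \ A).card = B.card - A.card := Finset.card_sdiff_of_subset hAB
  have h4 : A.card ≤ B.card := Finset.card_le_card hAB
  have h5 := M.le_card A
  unfold MatroidRk.Indep at *
  rw [h0, h1, M.r_empty] at h
  omega

lemma cl_mono (e : Fin n) {A B : Finset (Fin n)} (hAB : A ⊆ B)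
    (h : M.r (insert e A) = M.r A) : M.r (insert e B) = M.r B := by
  have hs := M.submod (insert e A) B
  have hu : insert e A ∪ B = insert e B := by
    rw [Finset.insert_union, Finset.union_eq_right.mpr hAB]
  have hi : M.r A ≤ M.r ((insert e A) ∩ B) :=
    M.mono (Finset.subset_inter (Finset.subset_insert _ _) hAB)
  have hge := M.le_r_insert e B
  rw [hu, h] at hs
  omega

lemma indep_of_all_drop :
    ∀ B : Finset (Fin n), (∀ f ∈ B, M.r (B.erase f) < M.r B) → M.r B = B.card := by
  intro B
  induction B using Finset.strongInductionOn with
  | _ B ih =>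
    intro hd
    rcases B.eq_empty_or_nonempty with rfl | ⟨f, hf⟩
    · simp [M.r_empty]
    · have herase : ∀ g ∈ B, M.r (B.erase g) + 1 = M.r B := by
        intro g hg
        have h1 := hd g hg
        have h2 : M.r B ≤ M.r (B.erase g) + 1 := by
          have := M.r_insert_le g (B.erase g)
          rwa [Finset.insert_erase hg] at this
        omega
      have hsub : ∀ g ∈ B.erase f, M.r ((B.erase f).erase g) < M.r (B.erase f) := by
        intro g hg
        have hgB : g ∈ B := Finset.mem_of_mem_erase hg
        have hgf : g ≠ f := Finset.ne_of_mem_erase hg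
        have hunion : (B.erase f) ∪ (B.erase g) = B := by
          ext x
          simp only [Finset.mem_union, Finset.mem_erase]
          constructor
          · rintro (⟨_, hx⟩ | ⟨_, hx⟩) <;> exact hx
          · intro hx
            by_cases hxf : x = f
            · exact Or.inr ⟨by rw [hxf]; exact fun h => hgf h.symm, hx⟩
            · exact Or.inl ⟨hxf, hx⟩
        have hinter : (B.erase f) ∩ (B.erase g) = (B.erase f).erase g := by
          ext x
          simp only [Finset.mem_inter, Finset.mem_erase]
          tauto
        have hs := M.submod (B.erase f) (B.erase g)
        rw [hinter, hunion] at hs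
        have e1 := herase f hf
        have e2 := herase g hgB
        omega
      have hIH := ih (B.erase f) (Finset.erase_ssubset hf) hsub
      have he1 := herase f hf
      have he2 : (B.erase f).card = B.card - 1 := Finset.card_erase_of_mem hf
      have he3 : 1 ≤ B.card := Finset.card_pos.mpr ⟨f, hf⟩
      omega

lemma key (M₁ M₂ : MatroidRk n)
    (hsub : ∀ C : Finset (Fin n), M₁.IsCircuit C → M₂.IsCircuit C) :
    ∀ C : Finset (Fin n), ∀ e, M₁.r (insert e C) = M₁.r C →
      M₂.r (insert e C) = M₂.r C := by
  intro C
  induction C using Finset.strongInductionOn with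
  | _ C ih =>
    intro e h1
    by_cases heC : e ∈ C
    · rw [Finset.insert_eq_self.mpr heC]
    by_cases hex : ∃ f ∈ C, M₁.r (insert e (C.erase f)) = M₁.r (C.erase f)
    · obtain ⟨f, hf, hfe⟩ := hex
      have h2 := ih (C.erase f) (Finset.erase_ssubset hf) e hfe
      exact M₂.cl_mono e (Finset.erase_subset f C) h2
    · push_neg at hex
      have hdrop : ∀ f ∈ C, M₁.r (C.erase f) < M₁.r C := by
        intro f hf
        have hle : M₁.r (C.erase f) ≤ M₁.r C := M₁.mono (Finset.erase_subset f C)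
        rcases hle.lt_or_eq with h | h
        · exact h
        · exfalso
          have hfcl : M₁.r (insert f (C.erase f)) = M₁.r (C.erase f) := by
            rw [Finset.insert_erase hf, h]
          have hcl := M₁.cl_mono f (Finset.subset_insert e (C.erase f)) hfcl
          have hset : insert f (insert e (C.erase f)) = insert e C := by
            rw [Finset.insert_comm, Finset.insert_erase hf]
          rw [hset] at hcl
          exact hex f hf (by omega)
      have hCindep : M₁.r C = C.card := M₁.indep_of_all_drop C hdrop
      have hcirc : M₁.IsCircuit (insert e C) := by
        constructor
        · unfold MatroidRk.Indep
          rw [Finset.card_insert_of_notMem heC]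
          omega
        · intro A hA
          by_cases heA : e ∈ A
          · have hA'sub : A.erase e ⊆ C := by
              intro x hx
              have hxA := Finset.mem_of_mem_erase hx
              have hxe := Finset.ne_of_mem_erase hx
              rcases Finset.mem_insert.mp (hA.subset hxA) with h | h
              · exact absurd h hxe
              · exact h
            have hA'ne : A.erase e ≠ C := by
              intro hEq
              have hAe : A = insert e C := by rw [← hEq, Finset.insert_erase heA]
              exact hA.ne hAe
            obtain ⟨f, hfC, hfA⟩ := Finset.exists_of_ssubset
              (Finset.ssubset_iff_subset_ne.mpr ⟨hA'sub, hA'ne⟩)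
            have hsubf : A.erase e ⊆ C.erase f := by
              intro x hx
              refine Finset.mem_erase.mpr ⟨?_, hA'sub hx⟩
              intro hxf
              exact hfA (hxf ▸ hx)
            have hne : M₁.r (insert e (A.erase e)) ≠ M₁.r (A.erase e) := by
              intro hEq
              exact hex f hfC (M₁.cl_mono e hsubf hEq)
            have hAind : M₁.Indep (A.erase e) := M₁.indep_subset hA'sub hCindep
            have hub := M₁.r_insert_le e (A.erase e)
            have hlb := M₁.le_r_insert e (A.erase e)
            unfold MatroidRk.Indep at hAind ⊢
            rw [← Finset.insert_erase heA,
              Finset.card_insert_of_notMem (Finset.notMem_erase e A)]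
            omega
          · exact M₁.indep_subset
              ((Finset.subset_insert_iff_of_notMem heA).mp hA.subset) hCindep
      obtain ⟨hdep2, hmin2⟩ := hsub _ hcirc
      have hCind2 : M₂.Indep C := hmin2 C (Finset.ssubset_insert heC)
      have h2le := M₂.le_card (insert e C)
      have hcard : (insert e C).card = C.card + 1 := Finset.card_insert_of_notMem heC
      have hge := M₂.le_r_insert e C
      unfold MatroidRk.Indep at hdep2 hCind2
      omega

end MatroidRk

/-- if every circuit of `M₁` is a circuit of `M₂`, then for every `C` and
every `S` disjoint from `C`, `r_{M₁}(C∪S) − r_{M₁}(C) ≥ r_{M₂}(C∪S) − r_{M₂}(C)`. -/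
theorem stmt6 (n : ℕ) (M₁ M₂ : MatroidRk n)
    (hsub : ∀ C : Finset (Fin n), M₁.IsCircuit C → M₂.IsCircuit C)
    (C S : Finset (Fin n)) (hS : Disjoint S C) :
    (M₂.r (C ∪ S) : ℤ) - (M₂.r C : ℤ) ≤ (M₁.r (C ∪ S) : ℤ) - (M₁.r C : ℤ) := by
  have key := MatroidRk.key M₁ M₂ hsub
  have step : ∀ (T : Finset (Fin n)) (e : Fin n),
      (M₂.r (insert e T) : ℤ) - (M₂.r T : ℤ) ≤ (M₁.r (insert e T) : ℤ) - (M₁.r T : ℤ) := by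
    intro T e
    have u1 := M₁.r_insert_le e T
    have l1 := M₁.le_r_insert e T
    have u2 := M₂.r_insert_le e T
    have l2 := M₂.le_r_insert e T
    by_cases h : M₁.r (insert e T) = M₁.r T
    · have := key T e h
      omega
    · omega
  clear hS
  induction S using Finset.induction_on with
  | empty => simp
  | @insert e S hnot ih =>
    rw [Finset.union_insert]
    have hstep := step (C ∪ S) e
    omega
end

section
/- Let M be a matroid on N_n whose rank function spans an extreme ray of Γ_n, with r_M(N_n) = 2, and suppose there exists i ∈ N_n \ {1,2} such that {1,2,i} is a circuit of M and every j ∈ N_n \ {1,2,i} is either parallel to i in M or a loop of M. If a, b > 0 and a·r_M + b·r_{U_{1,2}^n} is entropic, then a + b ≥ log m, where m is the least integer with m ≥ exp(a). -/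
open Finset

namespace S9

variable {N : ℕ}

noncomputable def pm {S : Type} [DecidableEq S] (p : Fin N → ℝ) (V : Fin N → S) (s : S) : ℝ :=
  ∑ ω ∈ univ.filter (fun ω => V ω = s), p ω

noncomputable def possupp {S : Type} [DecidableEq S] (p : Fin N → ℝ) (V : Fin N → S) : Finset S :=
  (univ.filter (fun ω => 0 < p ω)).image V

noncomputable def ent {S : Type} [DecidableEq S] (p : Fin N → ℝ) (V : Fin N → S) : ℝ :=
  ∑ ω, p ω * (-Real.log (pm p V (V ω)))

variable {S T : Type} [DecidableEq S] [DecidableEq T] {p : Fin N → ℝ} {V : Fin N → S}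

lemma pm_nonneg (hp0 : ∀ ω, 0 ≤ p ω) (s : S) : 0 ≤ pm p V s :=
  Finset.sum_nonneg fun ω _ => hp0 ω

lemma le_pm (hp0 : ∀ ω, 0 ≤ p ω) (ω : Fin N) : p ω ≤ pm p V (V ω) :=
  Finset.single_le_sum (fun ω _ => hp0 ω) (by simp)

lemma pm_pos (hp0 : ∀ ω, 0 ≤ p ω) {ω : Fin N} (h : 0 < p ω) : 0 < pm p V (V ω) :=
  lt_of_lt_of_le h (le_pm hp0 ω)

lemma mem_possupp_iff {s : S} : s ∈ possupp p V ↔ ∃ ω, 0 < p ω ∧ V ω = s := by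
  simp [possupp]

lemma pm_pos_of_mem (hp0 : ∀ ω, 0 ≤ p ω) {s : S} (hs : s ∈ possupp p V) : 0 < pm p V s := by
  obtain ⟨ω, hω, rfl⟩ := mem_possupp_iff.1 hs
  exact pm_pos hp0 hω

/-- restrict the pm-sum to positive atoms -/
lemma pm_eq_sum_pos (hp0 : ∀ ω, 0 ≤ p ω) (s : S) :
    pm p V s = ∑ ω ∈ univ.filter (fun ω => 0 < p ω ∧ V ω = s), p ω := by
  rw [pm]
  refine (Finset.sum_subset ?_ ?_).symm
  · intro ω hω
    simp only [mem_filter] at hω ⊢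
    exact ⟨mem_univ ω, hω.2.2⟩
  · intro ω hω hω'
    simp only [mem_filter, not_and] at hω hω'
    rcases lt_or_eq_of_le (hp0 ω) with h | h
    · exact absurd hω.2 (by simpa using hω' (mem_univ ω) h)
    · exact h.symm

lemma sum_pm_possupp (hp0 : ∀ ω, 0 ≤ p ω) (hp1 : ∑ ω, p ω = 1) :
    ∑ s ∈ possupp p V, pm p V s = 1 := by
  classical
  have key : ∀ s ∈ possupp p V, pm p V s
      = ∑ ω ∈ (univ.filter (fun ω => 0 < p ω)).filter (fun ω => V ω = s), p ω := by
    intro s _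
    rw [pm_eq_sum_pos hp0, Finset.filter_filter]
  rw [Finset.sum_congr rfl key,
    Finset.sum_fiberwise_of_maps_to (fun ω hω => mem_possupp_iff.2 ⟨ω, (mem_filter.1 hω).2, rfl⟩)]
  rw [← hp1]
  refine Finset.sum_subset (filter_subset _ _) ?_
  intro ω _ hω
  simp only [mem_filter, mem_univ, true_and] at hω
  exact le_antisymm (not_lt.1 hω) (hp0 ω)

lemma ent_eq_sum_possupp (hp0 : ∀ ω, 0 ≤ p ω) :
    ent p V = ∑ s ∈ possupp p V, Real.negMulLog (pm p V s) := by
  classical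
  have h0 : ent p V = ∑ ω ∈ univ.filter (fun ω => 0 < p ω), p ω * (-Real.log (pm p V (V ω))) := by
    rw [ent]
    refine (Finset.sum_subset (filter_subset _ _) ?_).symm
    intro ω _ hω
    simp only [mem_filter, mem_univ, true_and] at hω
    have : p ω = 0 := le_antisymm (not_lt.1 hω) (hp0 ω)
    simp [this]
  rw [h0, ← Finset.sum_fiberwise_of_maps_to
      (g := V) (t := possupp p V)
      (fun ω hω => mem_possupp_iff.2 ⟨ω, (mem_filter.1 hω).2, rfl⟩)]
  refine Finset.sum_congr rfl fun s hs => ?_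
  have : ∀ ω ∈ (univ.filter (fun ω => 0 < p ω)).filter (fun ω => V ω = s),
      p ω * (-Real.log (pm p V (V ω))) = p ω * (-Real.log (pm p V s)) := by
    intro ω hω
    rw [(mem_filter.1 hω).2]
  rw [Finset.sum_congr rfl this, ← Finset.sum_mul, Finset.filter_filter,
    ← pm_eq_sum_pos hp0, Real.negMulLog]
  ring

lemma Hent_eq_sum_possupp (hp0 : ∀ ω, 0 ≤ p ω) :
    Hent p V = ∑ s ∈ possupp p V, Real.negMulLog (pm p V s) := by
  classical
  rw [Hent]
  refine (Finset.sum_subset ?_ ?_).symm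
  · intro s hs
    obtain ⟨ω, _, rfl⟩ := mem_possupp_iff.1 hs
    exact Finset.mem_image_of_mem V (mem_univ ω)
  · intro s _ hs
    have : pm p V s = 0 := by
      rw [pm_eq_sum_pos hp0]
      refine Finset.sum_eq_zero fun ω hω => ?_
      simp only [mem_filter, mem_univ, true_and] at hω
      exact absurd (mem_possupp_iff.2 ⟨ω, hω.1, hω.2⟩) hs
    show Real.negMulLog (pm p V s) = 0
    simp [this]

lemma Hent_eq_ent (hp0 : ∀ ω, 0 ≤ p ω) : Hent p V = ent p V := by
  rw [Hent_eq_sum_possupp hp0, ent_eq_sum_possupp hp0]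

lemma ent_congr {W : Fin N → T} (h : ∀ ω ω', V ω = V ω' ↔ W ω = W ω') :
    ent p V = ent p W := by
  refine Finset.sum_congr rfl fun ω _ => ?_
  have : pm p V (V ω) = pm p W (W ω) := by
    rw [pm, pm]
    refine Finset.sum_congr ?_ fun _ _ => rfl
    ext ω'
    simp only [mem_filter, mem_univ, true_and]
    exact h ω' ω
  rw [this]

lemma sum_p_pos (hp0 : ∀ ω, 0 ≤ p ω) (hp1 : ∑ ω, p ω = 1) :
    ∑ ω ∈ univ.filter (fun ω => 0 < p ω), p ω = 1 := by
  rw [← hp1]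
  refine Finset.sum_subset (filter_subset _ _) ?_
  intro ω _ hω
  simp only [mem_filter, mem_univ, true_and] at hω
  exact le_antisymm (not_lt.1 hω) (hp0 ω)

lemma ent_eq_sum_pos (hp0 : ∀ ω, 0 ≤ p ω) :
    ent p V = ∑ ω ∈ univ.filter (fun ω => 0 < p ω), p ω * (-Real.log (pm p V (V ω))) := by
  rw [ent]
  refine (Finset.sum_subset (filter_subset _ _) ?_).symm
  intro ω _ hω
  simp only [mem_filter, mem_univ, true_and] at hω
  have : p ω = 0 := le_antisymm (not_lt.1 hω) (hp0 ω)
  simp [this]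

lemma indep_of_ent_add (hp0 : ∀ ω, 0 ≤ p ω) (hp1 : ∑ ω, p ω = 1)
    {Y : Fin N → S} {Z : Fin N → T}
    (h : ent p (fun ω => (Y ω, Z ω)) = ent p Y + ent p Z) :
    ∀ y ∈ possupp p Y, ∀ z ∈ possupp p Z,
      (y, z) ∈ possupp p (fun ω => (Y ω, Z ω)) ∧
      pm p (fun ω => (Y ω, Z ω)) (y, z) = pm p Y y * pm p Z z := by
  classical
  set W : Fin N → S × T := fun ω => (Y ω, Z ω) with hW
  set t := univ.filter (fun ω => 0 < p ω) with ht
  -- positivity at positive atoms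
  have hYpos : ∀ ω ∈ t, 0 < pm p Y (Y ω) := by
    intro ω hω; exact pm_pos hp0 (mem_filter.1 hω).2
  have hZpos : ∀ ω ∈ t, 0 < pm p Z (Z ω) := by
    intro ω hω; exact pm_pos hp0 (mem_filter.1 hω).2
  have hWpos : ∀ ω ∈ t, 0 < pm p W (W ω) := by
    intro ω hω; exact pm_pos hp0 (mem_filter.1 hω).2
  -- the log sum is zero
  have hzero : ∑ ω ∈ t, p ω * Real.log ((pm p Y (Y ω) * pm p Z (Z ω)) / pm p W (W ω)) = 0 := by
    have expand : ∀ ω ∈ t,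
        p ω * Real.log ((pm p Y (Y ω) * pm p Z (Z ω)) / pm p W (W ω))
        = (p ω * (-Real.log (pm p W (W ω))))
          - (p ω * (-Real.log (pm p Y (Y ω)))) - (p ω * (-Real.log (pm p Z (Z ω)))) := by
      intro ω hω
      rw [Real.log_div (ne_of_gt (mul_pos (hYpos ω hω) (hZpos ω hω))) (ne_of_gt (hWpos ω hω)),
        Real.log_mul (ne_of_gt (hYpos ω hω)) (ne_of_gt (hZpos ω hω))]
      ring
    rw [Finset.sum_congr rfl expand]
    have e1 := ent_eq_sum_pos (p := p) (V := W) hp0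
    have e2 := ent_eq_sum_pos (p := p) (V := Y) hp0
    have e3 := ent_eq_sum_pos (p := p) (V := Z) hp0
    rw [← ht] at e1 e2 e3
    rw [Finset.sum_sub_distrib, Finset.sum_sub_distrib, ← e1, ← e2, ← e3]
    rw [h]; ring
  -- the ratio sum equals the product-sum over possupp W
  have hA : ∑ ω ∈ t, p ω * ((pm p Y (Y ω) * pm p Z (Z ω)) / pm p W (W ω))
      = ∑ s ∈ possupp p W, pm p Y s.1 * pm p Z s.2 := by
    rw [← Finset.sum_fiberwise_of_maps_to (g := W) (t := possupp p W)
      (fun ω hω => mem_possupp_iff.2 ⟨ω, (mem_filter.1 hω).2, rfl⟩)]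
    refine Finset.sum_congr rfl fun s hs => ?_
    have hpmW : 0 < pm p W s := pm_pos_of_mem hp0 hs
    have : ∀ ω ∈ t.filter (fun ω => W ω = s),
        p ω * ((pm p Y (Y ω) * pm p Z (Z ω)) / pm p W (W ω))
        = ((pm p Y s.1 * pm p Z s.2) / pm p W s) * p ω := by
      intro ω hω
      have hWs : W ω = s := (mem_filter.1 hω).2
      have h1 : Y ω = s.1 := by rw [← hWs]
      have h2 : Z ω = s.2 := by rw [← hWs]
      rw [h1, h2, hWs]; ring
    rw [Finset.sum_congr rfl this, ← Finset.mul_sum]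
    have : ∑ ω ∈ t.filter (fun ω => W ω = s), p ω = pm p W s := by
      rw [pm_eq_sum_pos hp0, ht, Finset.filter_filter]
    rw [this, div_mul_cancel₀ _ (ne_of_gt hpmW)]
  have hsub : possupp p W ⊆ (possupp p Y) ×ˢ (possupp p Z) := by
    intro s hs
    obtain ⟨ω, hω, hωs⟩ := mem_possupp_iff.1 hs
    rw [Finset.mem_product]
    exact ⟨mem_possupp_iff.2 ⟨ω, hω, by rw [← hωs]⟩, mem_possupp_iff.2 ⟨ω, hω, by rw [← hωs]⟩⟩
  have hfull : ∑ s ∈ (possupp p Y) ×ˢ (possupp p Z), pm p Y s.1 * pm p Z s.2 = 1 := by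
    rw [Finset.sum_product]
    have : ∀ y ∈ possupp p Y, ∑ z ∈ possupp p Z, pm p Y y * pm p Z z = pm p Y y := by
      intro y _
      rw [← Finset.mul_sum, sum_pm_possupp hp0 hp1, mul_one]
    rw [Finset.sum_congr rfl this, sum_pm_possupp hp0 hp1]
  have hAle : ∑ s ∈ possupp p W, pm p Y s.1 * pm p Z s.2 ≤ 1 := by
    rw [← hfull]
    exact Finset.sum_le_sum_of_subset_of_nonneg hsub
      (fun s _ _ => mul_nonneg (pm_nonneg hp0 _) (pm_nonneg hp0 _))
  have hpoint : ∀ ω ∈ t,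
      p ω * Real.log ((pm p Y (Y ω) * pm p Z (Z ω)) / pm p W (W ω))
      ≤ p ω * ((pm p Y (Y ω) * pm p Z (Z ω)) / pm p W (W ω) - 1) := by
    intro ω hω
    refine mul_le_mul_of_nonneg_left ?_ (hp0 ω)
    have h1 := hYpos ω hω; have h2 := hZpos ω hω; have h3 := hWpos ω hω
    exact Real.log_le_sub_one_of_pos (by positivity)
  have hsum2 : ∑ ω ∈ t, p ω * ((pm p Y (Y ω) * pm p Z (Z ω)) / pm p W (W ω) - 1)
      = (∑ s ∈ possupp p W, pm p Y s.1 * pm p Z s.2) - 1 := by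
    have : ∀ ω ∈ t, p ω * ((pm p Y (Y ω) * pm p Z (Z ω)) / pm p W (W ω) - 1)
        = p ω * ((pm p Y (Y ω) * pm p Z (Z ω)) / pm p W (W ω)) - p ω := by
      intro ω _; ring
    rw [Finset.sum_congr rfl this, Finset.sum_sub_distrib, hA, sum_p_pos hp0 hp1]
  -- squeeze
  have hle : (0:ℝ) ≤ (∑ s ∈ possupp p W, pm p Y s.1 * pm p Z s.2) - 1 := by
    rw [← hsum2, ← hzero]
    exact Finset.sum_le_sum hpoint
  have hAeq : ∑ s ∈ possupp p W, pm p Y s.1 * pm p Z s.2 = 1 := le_antisymm hAle (by linarith)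
  -- pointwise equality in the log inequality
  have hsums_eq : ∑ ω ∈ t, p ω * Real.log ((pm p Y (Y ω) * pm p Z (Z ω)) / pm p W (W ω))
      = ∑ ω ∈ t, p ω * ((pm p Y (Y ω) * pm p Z (Z ω)) / pm p W (W ω) - 1) := by
    rw [hzero, hsum2, hAeq]; ring
  have hpteq := (Finset.sum_eq_sum_iff_of_le hpoint).1 hsums_eq
  have hpm_eq : ∀ ω, 0 < p ω → pm p W (W ω) = pm p Y (Y ω) * pm p Z (Z ω) := by
    intro ω hpω
    have hωt : ω ∈ t := by simp [ht, hpω]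
    have := hpteq ω hωt
    have hx : 0 < (pm p Y (Y ω) * pm p Z (Z ω)) / pm p W (W ω) := by
      have := hYpos ω hωt; have := hZpos ω hωt; have := hWpos ω hωt; positivity
    have hlog : Real.log ((pm p Y (Y ω) * pm p Z (Z ω)) / pm p W (W ω))
        = (pm p Y (Y ω) * pm p Z (Z ω)) / pm p W (W ω) - 1 :=
      mul_left_cancel₀ (ne_of_gt hpω) this
    by_contra hne
    have hne1 : (pm p Y (Y ω) * pm p Z (Z ω)) / pm p W (W ω) ≠ 1 := by
      intro h1
      exact hne ((div_eq_one_iff_eq (ne_of_gt (hWpos ω hωt))).1 h1).symm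
    exact absurd hlog (ne_of_lt (Real.log_lt_sub_one_of_pos hx hne1))
  -- membership of all product pairs
  intro y hy z hz
  have hprodpos : 0 < pm p Y y * pm p Z z :=
    mul_pos (pm_pos_of_mem hp0 hy) (pm_pos_of_mem hp0 hz)
  have hmem : (y, z) ∈ possupp p W := by
    by_contra hnm
    have hsd : ((possupp p Y) ×ˢ (possupp p Z)) \ possupp p W ≠ ∅ := by
      intro hemp
      have : (y,z) ∈ ((possupp p Y) ×ˢ (possupp p Z)) \ possupp p W := by
        rw [Finset.mem_sdiff, Finset.mem_product]
        exact ⟨⟨hy, hz⟩, hnm⟩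
      rw [hemp] at this; exact absurd this (Finset.notMem_empty _)
    have hzero' : ∑ s ∈ ((possupp p Y) ×ˢ (possupp p Z)) \ possupp p W,
        pm p Y s.1 * pm p Z s.2 = 0 := by
      have := Finset.sum_sdiff (f := fun s : S × T => pm p Y s.1 * pm p Z s.2) hsub
      rw [hAeq, hfull] at this
      linarith
    have := (Finset.sum_eq_zero_iff_of_nonneg
      (fun s _ => mul_nonneg (pm_nonneg hp0 _) (pm_nonneg hp0 _))).1 hzero'
        (y, z) (by rw [Finset.mem_sdiff, Finset.mem_product]; exact ⟨⟨hy, hz⟩, hnm⟩)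
    simp only at this
    rw [this] at hprodpos
    exact lt_irrefl _ hprodpos
  refine ⟨hmem, ?_⟩
  obtain ⟨ω, hpω, hωs⟩ := mem_possupp_iff.1 hmem
  have h1 : Y ω = y := congrArg Prod.fst hωs
  have h2 : Z ω = z := congrArg Prod.snd hωs
  have := hpm_eq ω hpω
  rw [hωs] at this
  rw [h1, h2] at this
  exact this

lemma det_of_ent_eq (hp0 : ∀ ω, 0 ≤ p ω)
    {W : Fin N → T} (f : S → T) (hf : ∀ ω, W ω = f (V ω)) (h : ent p V = ent p W) :
    ∀ ω ω', 0 < p ω → 0 < p ω' → W ω = W ω' → V ω = V ω' := by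
  classical
  have hle : ∀ ω : Fin N, pm p V (V ω) ≤ pm p W (W ω) := by
    intro ω
    refine Finset.sum_le_sum_of_subset_of_nonneg ?_ (fun ω' _ _ => hp0 ω')
    intro ω' hω'
    simp only [mem_filter, mem_univ, true_and] at hω' ⊢
    rw [hf, hf, hω']
  have hterm : ∀ ω ∈ (univ : Finset (Fin N)),
      p ω * (-Real.log (pm p W (W ω))) ≤ p ω * (-Real.log (pm p V (V ω))) := by
    intro ω _
    rcases lt_or_eq_of_le (hp0 ω) with hpω | hpω
    · refine mul_le_mul_of_nonneg_left (neg_le_neg ?_) (hp0 ω)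
      exact Real.log_le_log (pm_pos hp0 hpω) (hle ω)
    · rw [← hpω]; simp
  have hpt := (Finset.sum_eq_sum_iff_of_le hterm).1 (by rw [← ent, ← ent, h])
  have hpm : ∀ ω, 0 < p ω → pm p V (V ω) = pm p W (W ω) := by
    intro ω hpω
    have := hpt ω (mem_univ ω)
    have hlog : Real.log (pm p W (W ω)) = Real.log (pm p V (V ω)) := by
      have := mul_left_cancel₀ (ne_of_gt hpω) this
      linarith
    have h1 : 0 < pm p V (V ω) := pm_pos hp0 hpω
    have h2 : 0 < pm p W (W ω) := lt_of_lt_of_le h1 (hle ω)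
    calc pm p V (V ω) = Real.exp (Real.log (pm p V (V ω))) := (Real.exp_log h1).symm
      _ = Real.exp (Real.log (pm p W (W ω))) := by rw [hlog]
      _ = pm p W (W ω) := Real.exp_log h2
  intro ω ω' hpω hpω' hWeq
  by_contra hne
  have hdisj : Disjoint (univ.filter (fun ω'' => V ω'' = V ω))
      (univ.filter (fun ω'' => V ω'' = V ω')) := by
    rw [Finset.disjoint_filter]
    intro ω'' _ h1 h2
    exact hne (by rw [← h1, h2])
  have hsubU : (univ.filter (fun ω'' => V ω'' = V ω)) ∪ (univ.filter (fun ω'' => V ω'' = V ω'))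
      ⊆ univ.filter (fun ω'' => W ω'' = W ω) := by
    intro ω'' hω''
    simp only [Finset.mem_union, mem_filter, mem_univ, true_and] at hω'' ⊢
    rcases hω'' with h1 | h1
    · rw [hf, hf, h1]
    · rw [hf, hf] at hWeq ⊢
      rw [h1, ← hWeq]
  have hbig : pm p V (V ω) + pm p V (V ω') ≤ pm p W (W ω) := by
    rw [pm, pm, pm, ← Finset.sum_union hdisj]
    exact Finset.sum_le_sum_of_subset_of_nonneg hsubU (fun ω'' _ _ => hp0 ω'')
  have := hpm ω hpω
  have hpos' : 0 < pm p V (V ω') := pm_pos hp0 hpω'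
  linarith

lemma possupp_nonempty (hp0 : ∀ ω, 0 ≤ p ω) (hp1 : ∑ ω, p ω = 1) :
    (possupp p V).Nonempty := by
  rcases Finset.eq_empty_or_nonempty (possupp p V) with h | h
  · have := sum_pm_possupp (V := V) hp0 hp1
    rw [h] at this
    simp at this
  · exact h

lemma ent_le_log_card (hp0 : ∀ ω, 0 ≤ p ω) (hp1 : ∑ ω, p ω = 1) :
    ent p V ≤ Real.log ((possupp p V).card) := by
  classical
  have hk : 0 < ((possupp p V).card : ℝ) := by
    have := possupp_nonempty (V := V) hp0 hp1
    exact_mod_cast Finset.card_pos.2 this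
  rw [ent_eq_sum_possupp hp0]
  have hterm : ∀ s ∈ possupp p V, Real.negMulLog (pm p V s)
      ≤ 1 / (possupp p V).card - pm p V s + pm p V s * Real.log ((possupp p V).card) := by
    intro s hs
    have hq : 0 < pm p V s := pm_pos_of_mem hp0 hs
    have hlog : -Real.log (pm p V s)
        = Real.log (1 / ((possupp p V).card * pm p V s)) + Real.log ((possupp p V).card) := by
      rw [one_div, Real.log_inv, Real.log_mul (ne_of_gt hk) (ne_of_gt hq)]
      ring
    have hb : pm p V s * Real.log (1 / ((possupp p V).card * pm p V s))
        ≤ pm p V s * (1 / ((possupp p V).card * pm p V s) - 1) :=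
      mul_le_mul_of_nonneg_left (Real.log_le_sub_one_of_pos (by positivity)) (le_of_lt hq)
    have hc : pm p V s * (1 / ((possupp p V).card * pm p V s) - 1)
        = 1 / (possupp p V).card - pm p V s := by
      field_simp
    calc Real.negMulLog (pm p V s) = pm p V s * (-Real.log (pm p V s)) := by
          rw [Real.negMulLog]; ring
      _ = pm p V s * Real.log (1 / ((possupp p V).card * pm p V s))
          + pm p V s * Real.log ((possupp p V).card) := by rw [hlog]; ring
      _ ≤ (1 / (possupp p V).card - pm p V s) + pm p V s * Real.log ((possupp p V).card) := by
          rw [← hc]; exact add_le_add_left hb _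
      _ = _ := by ring
  calc ∑ s ∈ possupp p V, Real.negMulLog (pm p V s)
      ≤ ∑ s ∈ possupp p V, (1 / (possupp p V).card - pm p V s
          + pm p V s * Real.log ((possupp p V).card)) := Finset.sum_le_sum hterm
    _ = (possupp p V).card * (1 / (possupp p V).card) - 1
        + 1 * Real.log ((possupp p V).card) := by
        rw [Finset.sum_add_distrib, Finset.sum_sub_distrib, ← Finset.sum_mul,
          sum_pm_possupp hp0 hp1, Finset.sum_const, nsmul_eq_mul]
    _ = Real.log ((possupp p V).card) := by
        field_simp
        ring
  
lemma log_card_le_ent (hp0 : ∀ ω, 0 ≤ p ω) (hp1 : ∑ ω, p ω = 1)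
    (k : ℕ) (hk0 : 0 < k)
    (hbd : ∀ s ∈ possupp p V, (k : ℝ) * pm p V s ≤ 1) :
    Real.log k ≤ ent p V := by
  classical
  have hk : 0 < (k : ℝ) := by exact_mod_cast hk0
  rw [ent_eq_sum_possupp hp0]
  have hterm : ∀ s ∈ possupp p V,
      pm p V s * Real.log k ≤ Real.negMulLog (pm p V s) := by
    intro s hs
    have hq : 0 < pm p V s := pm_pos_of_mem hp0 hs
    have h1 : pm p V s ≤ 1 / (k : ℝ) := by
      rw [le_div_iff₀ hk]
      linarith [hbd s hs]
    have h2 : Real.log (pm p V s) ≤ Real.log (1 / (k : ℝ)) :=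
      Real.log_le_log hq h1
    rw [one_div, Real.log_inv] at h2
    have : Real.log k ≤ -Real.log (pm p V s) := by linarith
    calc pm p V s * Real.log k
        ≤ pm p V s * (-Real.log (pm p V s)) := mul_le_mul_of_nonneg_left this (le_of_lt hq)
      _ = Real.negMulLog (pm p V s) := by rw [Real.negMulLog]; ring
  calc Real.log k
      = ∑ s ∈ possupp p V, pm p V s * Real.log k := by
        rw [← Finset.sum_mul, sum_pm_possupp hp0 hp1, one_mul]
    _ ≤ _ := Finset.sum_le_sum hterm

lemma key (hp0 : ∀ ω, 0 ≤ p ω) (hp1 : ∑ ω, p ω = 1)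
    (X0 X1 Z : Fin N → ℕ)
    (I1 : ent p (fun ω => (X1 ω, Z ω)) = ent p X1 + ent p Z)
    (I2 : ent p (fun ω => (X0 ω, Z ω)) = ent p X0 + ent p Z)
    (det1 : ∀ ω ω', 0 < p ω → 0 < p ω' → X1 ω = X1 ω' → Z ω = Z ω' → X0 ω = X0 ω')
    (det3 : ∀ ω ω', 0 < p ω → 0 < p ω' → X0 ω = X0 ω' → Z ω = Z ω' → X1 ω = X1 ω')
    (det2 : ∀ ω ω', 0 < p ω → 0 < p ω' → X0 ω = X0 ω' → X1 ω = X1 ω' → Z ω = Z ω') :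
    ∀ x ∈ possupp p X0, ((possupp p Z).card : ℝ) * pm p X0 x ≤ 1 := by
  classical
  have i1 := indep_of_ent_add hp0 hp1 I1
  have i2 := indep_of_ent_add hp0 hp1 I2
  -- Claim C : pm X0 (X0 ω) = pm X1 (X1 ω) at positive atoms
  have claimC : ∀ ω, 0 < p ω → pm p X0 (X0 ω) = pm p X1 (X1 ω) := by
    intro ω hpω
    have hx : X0 ω ∈ possupp p X0 := mem_possupp_iff.2 ⟨ω, hpω, rfl⟩
    have hy : X1 ω ∈ possupp p X1 := mem_possupp_iff.2 ⟨ω, hpω, rfl⟩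
    have hz : Z ω ∈ possupp p Z := mem_possupp_iff.2 ⟨ω, hpω, rfl⟩
    have e2 := (i2 (X0 ω) hx (Z ω) hz).2
    have e1 := (i1 (X1 ω) hy (Z ω) hz).2
    have mid : pm p (fun ω' => (X0 ω', Z ω')) (X0 ω, Z ω)
        = pm p (fun ω' => (X1 ω', Z ω')) (X1 ω, Z ω) := by
      rw [pm_eq_sum_pos hp0, pm_eq_sum_pos hp0]
      refine Finset.sum_congr ?_ (fun _ _ => rfl)
      ext ω'
      simp only [mem_filter, mem_univ, true_and, Prod.mk.injEq]
      constructor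
      · rintro ⟨hp', h0, hz'⟩
        exact ⟨hp', det3 ω' ω hp' hpω h0 hz', hz'⟩
      · rintro ⟨hp', h1', hz'⟩
        exact ⟨hp', det1 ω' ω hp' hpω h1' hz', hz'⟩
    have hzpos : 0 < pm p Z (Z ω) := pm_pos hp0 hpω
    have : pm p X0 (X0 ω) * pm p Z (Z ω) = pm p X1 (X1 ω) * pm p Z (Z ω) := by
      rw [← e2, ← e1, mid]
    exact mul_right_cancel₀ (ne_of_gt hzpos) this
  -- Claim A
  intro x hx
  obtain ⟨ω0, hpω0, rfl⟩ := mem_possupp_iff.1 hx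
  have hy0 : X1 ω0 ∈ possupp p X1 := mem_possupp_iff.2 ⟨ω0, hpω0, rfl⟩
  -- selection of atoms with X1 = X1 ω0 and Z = z
  have hsel : ∀ z : ℕ, ∃ ω, z ∈ possupp p Z → (0 < p ω ∧ X1 ω = X1 ω0 ∧ Z ω = z) := by
    intro z
    by_cases hz : z ∈ possupp p Z
    · obtain ⟨ω, hpω, hωs⟩ := mem_possupp_iff.1 (i1 (X1 ω0) hy0 z hz).1
      exact ⟨ω, fun _ => ⟨hpω, congrArg Prod.fst hωs, congrArg Prod.snd hωs⟩⟩
    · exact ⟨ω0, fun h => absurd h hz⟩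
  choose sel hselspec using hsel
  set φ : ℕ → ℕ := fun z => X0 (sel z) with hφ
  have hinj : ∀ z ∈ possupp p Z, ∀ z' ∈ possupp p Z, φ z = φ z' → z = z' := by
    intro z hz z' hz' heq
    obtain ⟨hp1', h11, h1z⟩ := hselspec z hz
    obtain ⟨hp2', h21, h2z⟩ := hselspec z' hz'
    rw [← h1z, ← h2z]
    exact det2 (sel z) (sel z') hp1' hp2' heq (by rw [h11, h21])
  have hmaps : ∀ z ∈ possupp p Z, φ z ∈ possupp p X0 := by
    intro z hz
    obtain ⟨hp', _, _⟩ := hselspec z hz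
    exact mem_possupp_iff.2 ⟨sel z, hp', rfl⟩
  have hpmφ : ∀ z ∈ possupp p Z, pm p X0 (φ z) = pm p X0 (X0 ω0) := by
    intro z hz
    obtain ⟨hp', h1', _⟩ := hselspec z hz
    rw [hφ]
    rw [claimC (sel z) hp', h1', ← claimC ω0 hpω0]
  calc ((possupp p Z).card : ℝ) * pm p X0 (X0 ω0)
      = ∑ z ∈ possupp p Z, pm p X0 (φ z) := by
        rw [Finset.sum_congr rfl hpmφ, Finset.sum_const, nsmul_eq_mul]
    _ = ∑ x' ∈ (possupp p Z).image φ, pm p X0 x' := (Finset.sum_image hinj).symm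
    _ ≤ ∑ x' ∈ possupp p X0, pm p X0 x' := by
        refine Finset.sum_le_sum_of_subset_of_nonneg ?_ (fun x' _ _ => pm_nonneg hp0 x')
        intro x' hx'
        obtain ⟨z, hz, rfl⟩ := Finset.mem_image.1 hx'
        exact hmaps z hz
    _ = 1 := sum_pm_possupp hp0 hp1

lemma ent_joint_singleton {n : ℕ} {p : Fin N → ℝ} (X : Fin n → Fin N → ℕ) (e : Fin n) :
    ent p (joint X {e}) = ent p (X e) := by
  refine ent_congr fun ω ω' => ?_
  constructor
  · intro h
    exact congrFun h ⟨e, mem_singleton_self e⟩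
  · intro h
    funext j
    have hj : (j : Fin n) = e := mem_singleton.1 j.2
    show X (j : Fin n) ω = X (j : Fin n) ω'
    rw [hj]; exact h

lemma ent_joint_pair {n : ℕ} {p : Fin N → ℝ} (X : Fin n → Fin N → ℕ) (e f : Fin n) :
    ent p (joint X {e, f}) = ent p (fun ω => (X e ω, X f ω)) := by
  refine ent_congr fun ω ω' => ?_
  constructor
  · intro h
    have he : X e ω = X e ω' := congrFun h ⟨e, by simp⟩
    have hf : X f ω = X f ω' := congrFun h ⟨f, by simp⟩
    show (X e ω, X f ω) = (X e ω', X f ω')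
    rw [he, hf]
  · intro h
    have he : X e ω = X e ω' := congrArg Prod.fst h
    have hf : X f ω = X f ω' := congrArg Prod.snd h
    funext j
    have hj : (j : Fin n) = e ∨ (j : Fin n) = f := by
      have := j.2
      simp only [Finset.mem_insert, Finset.mem_singleton] at this
      exact this
    show X (j : Fin n) ω = X (j : Fin n) ω'
    rcases hj with hj | hj <;> rw [hj]
    · exact he
    · exact hf

lemma ent_joint_triple {n : ℕ} {p : Fin N → ℝ} (X : Fin n → Fin N → ℕ) (e f g : Fin n) :
    ent p (joint X {e, f, g}) = ent p (fun ω => (X e ω, X f ω, X g ω)) := by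
  refine ent_congr fun ω ω' => ?_
  constructor
  · intro h
    have he : X e ω = X e ω' := congrFun h ⟨e, by simp⟩
    have hf : X f ω = X f ω' := congrFun h ⟨f, by simp⟩
    have hg : X g ω = X g ω' := congrFun h ⟨g, by simp⟩
    show (X e ω, X f ω, X g ω) = (X e ω', X f ω', X g ω')
    rw [he, hf, hg]
  · intro h
    have he : X e ω = X e ω' := congrArg Prod.fst h
    have hf : X f ω = X f ω' := congrArg (fun q => q.2.1) h
    have hg : X g ω = X g ω' := congrArg (fun q => q.2.2) h
    funext j
    have hj : (j : Fin n) = e ∨ (j : Fin n) = f ∨ (j : Fin n) = g := by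
      have := j.2
      simp only [Finset.mem_insert, Finset.mem_singleton] at this
      exact this
    show X (j : Fin n) ω = X (j : Fin n) ω'
    rcases hj with hj | hj | hj <;> rw [hj]
    · exact he
    · exact hf
    · exact hg

end S9

/-- Matúš-type outer bound: for `M` of rank 2 spanning an extreme ray of `Γ_n`
with a circuit `{1,2,i}` such that every other element is parallel to `i` or a loop, if
`a·r_M + b·r_{U_{1,2}^n}` is entropic with `a, b > 0`, then `a + b ≥ log ⌈exp a⌉`. -/
theorem stmt9 (n : ℕ) (hn : 2 ≤ n) (M : MatroidRk n)
    (hext : SpansExtremeRay M.rr) (hrk : M.r Finset.univ = 2)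
    (hC : ∃ i : Fin n, i ∉ ({⟨0, by omega⟩, ⟨1, by omega⟩} : Finset (Fin n)) ∧
      M.IsCircuit {⟨0, by omega⟩, ⟨1, by omega⟩, i} ∧
      ∀ j : Fin n, j ∉ ({⟨0, by omega⟩, ⟨1, by omega⟩, i} : Finset (Fin n)) →
        M.Parallel j i ∨ M.IsLoop j)
    (a b : ℝ) (ha : 0 < a) (hb : 0 < b)
    (hent : IsEntropic (fun A => a * M.rr A + b * rUone n 2 A)) :
    Real.log ((⌈Real.exp a⌉ : ℤ) : ℝ) ≤ a + b := by
  classical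
  obtain ⟨i, hiN, hcirc, -⟩ := hC
  have hmain : ∀ e0 e1 : Fin n, e0 ≠ e1 → i ∉ ({e0, e1} : Finset (Fin n)) →
      M.IsCircuit {e0, e1, i} → e0 ∈ alphaSet n 2 → e1 ∈ alphaSet n 2 → i ∉ alphaSet n 2 →
      Real.log ((⌈Real.exp a⌉ : ℤ) : ℝ) ≤ a + b := by
    intro e0 e1 hne01 hiN' hcirc' hα0 hα1 hαi
    have hi0 : i ≠ e0 := fun h => hiN' (by rw [h]; exact mem_insert_self _ _)
    have hi1 : i ≠ e1 := fun h => hiN' (by rw [h]; simp)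
    -- cardinalities
    have hc1i : ({e1, i} : Finset (Fin n)).card = 2 := by
      rw [card_insert_of_notMem (by rw [mem_singleton]; exact fun h => hi1 h.symm),
        card_singleton]
    have hc01 : ({e0, e1} : Finset (Fin n)).card = 2 := by
      rw [card_insert_of_notMem (by rw [mem_singleton]; exact hne01), card_singleton]
    have hc0i : ({e0, i} : Finset (Fin n)).card = 2 := by
      rw [card_insert_of_notMem (by rw [mem_singleton]; exact fun h => hi0 h.symm),
        card_singleton]
    have hcC : ({e0, e1, i} : Finset (Fin n)).card = 3 := by
      have h0m : e0 ∉ ({e1, i} : Finset (Fin n)) := by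
        simp only [mem_insert, mem_singleton]
        push_neg
        exact ⟨hne01, fun h => hi0 h.symm⟩
      rw [card_insert_of_notMem h0m, hc1i]
    -- ranks
    have hsingle : ∀ e : Fin n, e ∈ ({e0, e1, i} : Finset (Fin n)) → M.r {e} = 1 := by
      intro e he
      have hss : ({e} : Finset (Fin n)) ⊂ {e0, e1, i} := by
        refine (singleton_subset_iff.2 he).ssubset_of_ne ?_
        intro h
        rw [← h, card_singleton] at hcC
        omega
      have := hcirc'.2 {e} hss
      rwa [MatroidRk.Indep, card_singleton] at this
    have hpair : ∀ s : Finset (Fin n), s ⊆ {e0, e1, i} → s.card = 2 → M.r s = 2 := by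
      intro s hsub hcard
      have hss : s ⊂ ({e0, e1, i} : Finset (Fin n)) := by
        refine hsub.ssubset_of_ne ?_
        intro h
        rw [h, hcC] at hcard
        omega
      have := hcirc'.2 s hss
      rwa [MatroidRk.Indep, hcard] at this
    have hsub01 : ({e0, e1} : Finset (Fin n)) ⊆ {e0, e1, i} := by
      intro x hx
      simp only [mem_insert, mem_singleton] at hx ⊢
      tauto
    have hr01 : M.r {e0, e1} = 2 := hpair _ hsub01 hc01
    have hr0i : M.r {e0, i} = 2 := by
      refine hpair _ ?_ hc0i
      intro x hx
      simp only [mem_insert, mem_singleton] at hx ⊢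
      tauto
    have hr1i : M.r {e1, i} = 2 := by
      refine hpair _ ?_ hc1i
      intro x hx
      simp only [mem_insert, mem_singleton] at hx ⊢
      tauto
    have hrC : M.r {e0, e1, i} = 2 := by
      have hle := M.le_card {e0, e1, i}
      rw [hcC] at hle
      have hne3 : M.r {e0, e1, i} ≠ 3 := by
        intro h
        exact hcirc'.1 (by rw [MatroidRk.Indep, h, hcC])
      have hge := M.mono hsub01
      rw [hr01] at hge
      omega
    -- rUone values
    have hu0 : ∀ A : Finset (Fin n), e0 ∈ A → rUone n 2 A = 1 := by
      intro A hA0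
      rw [rUone, if_pos ⟨e0, mem_inter.2 ⟨hA0, hα0⟩⟩]
    have hu1 : ∀ A : Finset (Fin n), e1 ∈ A → rUone n 2 A = 1 := by
      intro A hA1
      rw [rUone, if_pos ⟨e1, mem_inter.2 ⟨hA1, hα1⟩⟩]
    have hui : rUone n 2 {i} = 0 := by
      rw [rUone, if_neg]
      rintro ⟨x, hx⟩
      rw [mem_inter, mem_singleton] at hx
      exact hαi (hx.1 ▸ hx.2)
    -- probability space
    obtain ⟨N, p, X, hp0, hp1, hA⟩ := hent
    have hval : ∀ A : Finset (Fin n),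
        a * M.rr A + b * rUone n 2 A = S9.ent p (joint X A) := by
      intro A
      have := hA A
      rwa [S9.Hent_eq_ent hp0] at this
    -- entropy values
    have v0 : S9.ent p (X e0) = a + b := by
      have h := hval {e0}
      rw [S9.ent_joint_singleton] at h
      rw [← h]
      simp only [MatroidRk.rr]
      rw [hsingle e0 (by simp), hu0 _ (mem_singleton_self _)]
      push_cast
      ring
    have v1 : S9.ent p (X e1) = a + b := by
      have h := hval {e1}
      rw [S9.ent_joint_singleton] at h
      rw [← h]
      simp only [MatroidRk.rr]
      rw [hsingle e1 (by simp), hu1 _ (mem_singleton_self _)]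
      push_cast
      ring
    have vZ : S9.ent p (X i) = a := by
      have h := hval {i}
      rw [S9.ent_joint_singleton] at h
      rw [← h]
      simp only [MatroidRk.rr]
      rw [hsingle i (by simp), hui]
      push_cast
      ring
    have v01 : S9.ent p (fun ω => (X e0 ω, X e1 ω)) = 2 * a + b := by
      have h := hval {e0, e1}
      rw [S9.ent_joint_pair] at h
      rw [← h]
      simp only [MatroidRk.rr]
      rw [hr01, hu0 _ (by simp)]
      push_cast
      ring
    have v0Z : S9.ent p (fun ω => (X e0 ω, X i ω)) = 2 * a + b := by
      have h := hval {e0, i}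
      rw [S9.ent_joint_pair] at h
      rw [← h]
      simp only [MatroidRk.rr]
      rw [hr0i, hu0 _ (by simp)]
      push_cast
      ring
    have v1Z : S9.ent p (fun ω => (X e1 ω, X i ω)) = 2 * a + b := by
      have h := hval {e1, i}
      rw [S9.ent_joint_pair] at h
      rw [← h]
      simp only [MatroidRk.rr]
      rw [hr1i, hu1 _ (by simp)]
      push_cast
      ring
    have vT : S9.ent p (fun ω => (X e0 ω, X e1 ω, X i ω)) = 2 * a + b := by
      have h := hval {e0, e1, i}
      rw [S9.ent_joint_triple] at h
      rw [← h]
      simp only [MatroidRk.rr]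
      rw [hrC, hu0 _ (by simp)]
      push_cast
      ring
    -- deterministic dependencies
    have hdet1 := S9.det_of_ent_eq hp0
      (V := fun ω => (X e0 ω, X e1 ω, X i ω)) (W := fun ω => (X e1 ω, X i ω))
      (fun s => (s.2.1, s.2.2)) (fun ω => rfl) (by rw [vT, v1Z])
    have hdet3 := S9.det_of_ent_eq hp0
      (V := fun ω => (X e0 ω, X e1 ω, X i ω)) (W := fun ω => (X e0 ω, X i ω))
      (fun s => (s.1, s.2.2)) (fun ω => rfl) (by rw [vT, v0Z])
    have hdet2 := S9.det_of_ent_eq hp0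
      (V := fun ω => (X e0 ω, X e1 ω, X i ω)) (W := fun ω => (X e0 ω, X e1 ω))
      (fun s => (s.1, s.2.1)) (fun ω => rfl) (by rw [vT, v01])
    have det1' : ∀ ω ω', 0 < p ω → 0 < p ω' → X e1 ω = X e1 ω' → X i ω = X i ω' →
        X e0 ω = X e0 ω' := by
      intro ω ω' h h' h1 h2
      refine congrArg (fun q : ℕ × ℕ × ℕ => q.1) (hdet1 ω ω' h h' ?_)
      show (X e1 ω, X i ω) = (X e1 ω', X i ω')
      rw [h1, h2]
    have det3' : ∀ ω ω', 0 < p ω → 0 < p ω' → X e0 ω = X e0 ω' → X i ω = X i ω' →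
        X e1 ω = X e1 ω' := by
      intro ω ω' h h' h1 h2
      refine congrArg (fun q : ℕ × ℕ × ℕ => q.2.1) (hdet3 ω ω' h h' ?_)
      show (X e0 ω, X i ω) = (X e0 ω', X i ω')
      rw [h1, h2]
    have det2' : ∀ ω ω', 0 < p ω → 0 < p ω' → X e0 ω = X e0 ω' → X e1 ω = X e1 ω' →
        X i ω = X i ω' := by
      intro ω ω' h h' h1 h2
      refine congrArg (fun q : ℕ × ℕ × ℕ => q.2.2) (hdet2 ω ω' h h' ?_)
      show (X e0 ω, X e1 ω) = (X e0 ω', X e1 ω')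
      rw [h1, h2]
    -- key bound
    have hbd := S9.key hp0 hp1 (X e0) (X e1) (X i)
      (by rw [v1Z, v1, vZ]; ring) (by rw [v0Z, v0, vZ]; ring) det1' det3' det2'
    -- endgame
    set k := (S9.possupp p (X i)).card with hk
    have hkpos : 0 < k := Finset.card_pos.2 (S9.possupp_nonempty hp0 hp1)
    have hup : a ≤ Real.log k := by
      rw [← vZ]
      exact S9.ent_le_log_card hp0 hp1
    have hlow : Real.log k ≤ a + b := by
      rw [← v0]
      exact S9.log_card_le_ent hp0 hp1 k hkpos hbd
    have hek : Real.exp a ≤ (k : ℝ) := by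
      calc Real.exp a ≤ Real.exp (Real.log k) := Real.exp_le_exp.2 hup
        _ = (k : ℝ) := Real.exp_log (by exact_mod_cast hkpos)
    have hceil : (⌈Real.exp a⌉ : ℤ) ≤ (k : ℤ) := Int.ceil_le.2 (by exact_mod_cast hek)
    have hcpos : (0 : ℝ) < ((⌈Real.exp a⌉ : ℤ) : ℝ) := by
      have : (0 : ℤ) < ⌈Real.exp a⌉ := Int.ceil_pos.2 (Real.exp_pos a)
      exact_mod_cast this
    calc Real.log ((⌈Real.exp a⌉ : ℤ) : ℝ)
        ≤ Real.log (k : ℝ) := Real.log_le_log hcpos (by exact_mod_cast hceil)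
      _ ≤ a + b := hlow
  exact hmain ⟨0, by omega⟩ ⟨1, by omega⟩
    (by simp [Fin.ext_iff]) hiN hcirc
    (by simp [alphaSet]) (by simp [alphaSet])
    (by
      intro hmem
      simp only [alphaSet, mem_filter, mem_univ, true_and] at hmem
      have hv : (i : ℕ) = 0 ∨ (i : ℕ) = 1 := by omega
      rcases hv with hv | hv
      · exact hiN (by simp only [mem_insert, mem_singleton]; left; exact Fin.ext hv)
      · exact hiN (by simp only [mem_insert, mem_singleton]; right; exact Fin.ext hv))
end
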